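/- arXiv:2602.18878 — 10 statements merged into one kernel-verified Lean document; each statement's English description precedes it below -/
import Mathlib

section
/- Local homogeneity for representations in C*-algebras: let G be a compact topological group, A a unital C*-algebra, and U a norm-continuous representation of G in A. Then there exists ε > 0 such that for every norm-continuous representation U' of G in A with sup_{g ∈ G} ‖U'(g) − U(g)‖ < ε there is a unitary v ∈ A with U'(g) = v U(g) v* for all g ∈ G. In particular, the orbit of U under conjugation by the unitary group of A is open in the set of norm-continuous representations with the supremum metric. -/
open MeasureTheory Polynomial TopologicalSpace

section Aux

variable {A : Type*} [CStarAlgebra A]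

/-- If `b` commutes with a selfadjoint element `a`, then it commutes with any real
continuous functional calculus applied to `a`. -/
lemma commute_cfc_of_commute {a b : A} (ha : IsSelfAdjoint a)
    (hab : Commute b a) (f : ℝ → ℝ) : Commute b (cfc f a) := by
  have hpolyA : ∀ q : ℝ[X], Commute b (aeval a q) := by
    intro q
    induction q using Polynomial.induction_on' with
    | add p q hp hq => simpa [map_add] using hp.add_right hq
    | monomial n r =>
      simp only [Polynomial.aeval_monomial]
      have hc : Commute b (algebraMap ℝ A r) := (Algebra.commutes r b).symm
      exact hc.mul_right (hab.pow_right n)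
  by_cases hf : ContinuousOn f (spectrum ℝ a)
  · rw [cfc_apply f a ha hf]
    have key : ∀ g : C(spectrum ℝ a, ℝ), Commute b (cfcHom ha g) := by
      have hclosed : IsClosed ((cfcHom ha (R := ℝ)) ⁻¹' {x : A | Commute b x}) := by
        apply IsClosed.preimage (cfcHom_isClosedEmbedding ha).continuous
        have : {x : A | Commute b x} = (fun x : A => b * x - x * b) ⁻¹' {0} := by
          ext x
          simp only [Set.mem_setOf_eq, Set.mem_preimage, Set.mem_singleton_iff, sub_eq_zero]
          exact Iff.rfl
        rw [this]
        exact isClosed_singleton.preimage <| by fun_prop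
      have hsub : ((polynomialFunctions (spectrum ℝ a)) : Set C(spectrum ℝ a, ℝ)) ⊆
          (cfcHom ha (R := ℝ)) ⁻¹' {x : A | Commute b x} := by
        intro p hp
        rw [polynomialFunctions_coe] at hp
        obtain ⟨q, rfl⟩ := hp
        have h1 : cfc (fun x : ℝ => q.eval x) a = aeval a q := cfc_polynomial q a ha
        rw [cfc_apply (fun x : ℝ => q.eval x) a ha (by fun_prop)] at h1
        have h2 : (⟨_, (Continuous.continuousOn (by fun_prop)
            (s := spectrum ℝ a) (f := fun x : ℝ => q.eval x)).restrict⟩ :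
            C(spectrum ℝ a, ℝ)) = Polynomial.toContinuousMapOnAlgHom (spectrum ℝ a) q := by
          ext x; rfl
        rw [h2] at h1
        simp only [Set.mem_preimage, Set.mem_setOf_eq, h1]
        exact hpolyA q
      intro g
      have hdense := polynomialFunctions.topologicalClosure (spectrum ℝ a)
      have hg : g ∈ closure ((polynomialFunctions (spectrum ℝ a)) : Set C(spectrum ℝ a, ℝ)) := by
        have := congrArg (fun S : Subalgebra ℝ C(spectrum ℝ a, ℝ) => (S : Set C(spectrum ℝ a, ℝ)))
          hdense
        simp only [Subalgebra.topologicalClosure_coe, Algebra.coe_top] at this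
        rw [this]; trivial
      exact closure_minimal hsub hclosed hg
    exact key _
  · rw [cfc_apply_of_not_continuousOn a hf]
    exact Commute.zero_right b

end Aux

section IntAux

lemma integrable_of_continuous_compact {G A : Type*} [TopologicalSpace G] [CompactSpace G]
    [MeasurableSpace G] [OpensMeasurableSpace G] [NormedRing A]
    {μ : MeasureTheory.Measure G} [MeasureTheory.IsFiniteMeasure μ] {f : G → A}
    (hf : Continuous f) : MeasureTheory.Integrable f μ := by
  borelize A
  have hsm : MeasureTheory.StronglyMeasurable f :=
    hf.stronglyMeasurable_of_mulSupport_subset_isCompact isCompact_univ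
      (Set.subset_univ _)
  obtain ⟨C, hC⟩ : ∃ C, ∀ x ∈ Set.range f, ‖x‖ ≤ C :=
    (isCompact_range hf).isBounded.exists_norm_le
  exact ⟨hsm.aestronglyMeasurable,
    MeasureTheory.HasFiniteIntegral.of_bounded (C := C)
      (Filter.Eventually.of_forall fun g => hC _ ⟨g, rfl⟩)⟩

end IntAux

/-- **Local homogeneity for representations in C*-algebras.**
For a norm-continuous representation `U` of a compact group `G` in a unital C*-algebra
`A` there is `ε > 0` such that every norm-continuous representation `U'` of `G` in `A`
with `⨆ g, ‖U' g − U g‖ < ε` is unitarily conjugate to `U`: there is a unitary `v ∈ A`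
with `U' g = v * U g * star v` for all `g`.  (In particular the `U(A)`-conjugation
orbit of `U` is open among norm-continuous representations in the supremum metric.) -/
theorem locally_homogeneous_rep_cstar
    {G : Type*} [Group G] [TopologicalSpace G] [IsTopologicalGroup G] [CompactSpace G]
    {A : Type*} [NormedRing A] [StarRing A] [CStarRing A] [NormedAlgebra ℂ A]
    [CompleteSpace A] [StarModule ℂ A]
    (U : G →* unitary A) (hU : Continuous fun g : G => (U g : A)) :
    ∃ ε > (0 : ℝ), ∀ U' : G →* unitary A,
      (Continuous fun g : G => (U' g : A)) →
      (⨆ g : G, ‖(U' g : A) - (U g : A)‖) < ε →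
      ∃ v ∈ unitary A, ∀ g : G, (U' g : A) = v * (U g : A) * star v := by
  obtain hA | hA := subsingleton_or_nontrivial A
  · exact ⟨1, one_pos, fun U' _ _ =>
      ⟨1, one_mem (unitary A), fun g => Subsingleton.elim _ _⟩⟩
  letI : CStarAlgebra A :=
    { ‹NormedRing A›, ‹StarRing A›, ‹CStarRing A›, ‹NormedAlgebra ℂ A›,
      ‹CompleteSpace A›, ‹StarModule ℂ A› with }
  refine ⟨1/2, by norm_num, fun U' hU' hdist => ?_⟩
  borelize G
  haveI : Nonempty G := ⟨1⟩
  set K₀ : PositiveCompacts G :=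
    ⟨⟨Set.univ, isCompact_univ⟩, by simpa using Set.univ_nonempty⟩ with hK₀
  set μ := Measure.haarMeasure K₀ with hμ
  haveI : IsProbabilityMeasure μ :=
    ⟨Measure.haarMeasure_self (K₀ := K₀)⟩
  -- the defect supremum
  set S : ℝ := ⨆ g : G, ‖(U' g : A) - (U g : A)‖ with hSdef
  have hbdd : BddAbove (Set.range fun g : G => ‖(U' g : A) - (U g : A)‖) := by
    refine ⟨2, ?_⟩
    rintro x ⟨g, rfl⟩
    calc ‖(U' g : A) - (U g : A)‖ ≤ ‖(U' g : A)‖ + ‖(U g : A)‖ := norm_sub_le _ _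
      _ ≤ 2 := by rw [CStarRing.norm_coe_unitary, CStarRing.norm_coe_unitary]; norm_num
  have hle : ∀ g : G, ‖(U' g : A) - (U g : A)‖ ≤ S := fun g => le_ciSup hbdd g
  -- the averaged intertwiner
  set F : G → A := fun g => (U' g : A) * star (U g : A) with hF
  have hFc : Continuous F := hU'.mul hU.star
  have hFi : Integrable F μ := integrable_of_continuous_compact (μ := μ) hFc
  set z : A := ∫ g, F g ∂μ with hz
  -- z is close to 1
  have hz1 : ‖z - 1‖ ≤ S := by
    have hint1 : (∫ _ : G, (1 : A) ∂μ) = 1 := by simp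
    rw [hz, ← hint1, ← integral_sub hFi (integrable_const 1)]
    have hb := norm_integral_le_of_norm_le_const (μ := μ) (f := fun g : G => F g - 1) (C := S)
      (Filter.Eventually.of_forall fun g => ?_)
    · simpa using hb
    have hFg : F g - 1 = ((U' g : A) - (U g : A)) * star (U g : A) := by
      rw [sub_mul, hF]
      simp [Unitary.coe_star_mul_self, Unitary.coe_mul_star_self]
    show ‖F g - 1‖ ≤ S
    rw [hFg]
    calc ‖((U' g : A) - (U g : A)) * star (U g : A)‖
        = ‖((U' g : A) - (U g : A)) * (star (U g) : unitary A)‖ := by rw [Unitary.coe_star]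
      _ = ‖(U' g : A) - (U g : A)‖ := CStarRing.norm_mul_coe_unitary _ _
      _ ≤ S := hle g
  have hS : S < 1/2 := hdist
  have hznorm : ‖z - 1‖ < 1 := lt_of_le_of_lt hz1 (by linarith)
  -- z is invertible
  have hz_unit : IsUnit z := by
    have h1 : ‖1 - z‖ < 1 := by rwa [norm_sub_rev] at hznorm
    have h2 : IsUnit (1 - (1 - z)) := ⟨Units.oneSub (1 - z) h1, rfl⟩
    rwa [sub_sub_cancel] at h2
  -- the intertwining identity
  have hstarU : ∀ g : G, star ((U g⁻¹ : unitary A) : A) = (U g : A) := by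
    intro g
    rw [map_inv, ← Unitary.star_eq_inv, Unitary.coe_star, star_star]
  have hstarU' : ∀ g : G, star ((U' g⁻¹ : unitary A) : A) = (U' g : A) := by
    intro g
    rw [map_inv, ← Unitary.star_eq_inv, Unitary.coe_star, star_star]
  have key : ∀ h : G, (U' h : A) * z = z * (U h : A) := by
    intro h
    have e1 : (U' h : A) * z = ∫ g, (U' h : A) * F g ∂μ :=
      ((ContinuousLinearMap.mul ℝ A ((U' h : A))).integral_comp_comm hFi).symm
    have e5 : (∫ g, F g * (U h : A) ∂μ) = z * (U h : A) :=
      ((ContinuousLinearMap.mul ℝ A).flip ((U h : A))).integral_comp_comm hFi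
    rw [e1, ← e5]
    have e2 : ∀ x : G, (U' h : A) * F x
        = (fun y : G => (U' y : A) * star ((U (h⁻¹ * y) : unitary A) : A)) (h * x) := by
      intro x
      simp only [hF, inv_mul_cancel_left, map_mul]
      push_cast
      rw [mul_assoc]
    have e4 : ∀ y : G, (U' y : A) * star ((U (h⁻¹ * y) : unitary A) : A)
        = F y * (U h : A) := by
      intro y
      rw [map_mul]
      push_cast
      rw [star_mul, hstarU h, hF, mul_assoc]
    calc (∫ g, (U' h : A) * F g ∂μ)
        = ∫ x, (fun y : G => (U' y : A) * star ((U (h⁻¹ * y) : unitary A) : A)) (h * x) ∂μ := by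
          simp only [e2]
      _ = ∫ y, (U' y : A) * star ((U (h⁻¹ * y) : unitary A) : A) ∂μ :=
          integral_mul_left_eq_self (μ := μ)
            (fun y : G => (U' y : A) * star ((U (h⁻¹ * y) : unitary A) : A)) h
      _ = ∫ y, F y * (U h : A) ∂μ := by simp only [e4]
  have key2 : ∀ h : G, star z * (U' h : A) = (U h : A) * star z := by
    intro h
    have h1 := congrArg star (key h⁻¹)
    rw [star_mul, star_mul, hstarU h, hstarU' h] at h1
    exact h1
  -- the positive invertible element a = z* z
  set a : A := star z * z with ha_def
  have ha : IsSelfAdjoint a := IsSelfAdjoint.star_mul_self z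
  have ha_unit : IsUnit a := hz_unit.star.mul hz_unit
  have hcomm_a : ∀ g : G, Commute ((U g : A)) a := by
    intro g
    show (U g : A) * a = a * (U g : A)
    calc (U g : A) * (star z * z) = ((U g : A) * star z) * z := by rw [mul_assoc]
      _ = (star z * (U' g : A)) * z := by rw [key2 g]
      _ = star z * ((U' g : A) * z) := by rw [mul_assoc]
      _ = star z * (z * (U g : A)) := by rw [key g]
      _ = (star z * z) * (U g : A) := by rw [mul_assoc]
  -- spectrum of a is positive
  have hspec : ∀ x ∈ spectrum ℝ a, 0 < x := by
    intro x hx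
    rcases (spectrum_star_mul_self_nonneg x hx).lt_or_eq with h | h
    · exact h
    · exact absurd (h ▸ hx) (spectrum.zero_notMem ℝ ha_unit)
  -- inverse square root via continuous functional calculus
  set f : ℝ → ℝ := fun x => (Real.sqrt x)⁻¹ with hf_def
  have hfc : ContinuousOn f (spectrum ℝ a) := by
    refine ContinuousOn.mono (s := {x : ℝ | 0 < x}) ?_ (fun x hx => hspec x hx)
    exact Real.continuous_sqrt.continuousOn.inv₀
      fun x hx => (Real.sqrt_pos.mpr hx).ne'
  set s : A := cfc f a with hs_def
  have hs_sa : IsSelfAdjoint s := cfc_predicate f a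
  have hcomm_as : Commute a s := by
    have := cfc_commute_cfc (id : ℝ → ℝ) f a
    rwa [cfc_id ℝ a ha] at this
  -- s * s * a = 1
  have h2 : cfc (fun x : ℝ => f x * f x * x) a = s * s * a := by
    rw [cfc_mul (fun x : ℝ => f x * f x) (fun x : ℝ => x) a (hfc.mul hfc) continuousOn_id,
      cfc_mul f f a hfc hfc, cfc_id' ℝ a ha]
  have h3 : cfc (fun x : ℝ => f x * f x * x) a = 1 := by
    rw [← cfc_one ℝ a ha]
    apply cfc_congr
    intro x hx
    have hx' := hspec x hx
    show f x * f x * x = 1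
    rw [hf_def]
    simp only
    rw [← mul_inv, Real.mul_self_sqrt hx'.le]
    exact inv_mul_cancel₀ hx'.ne'
  have hmul : s * s * a = 1 := by rw [← h2]; exact h3
  have hmul' : a * (s * s) = 1 := by
    have hcomm_ass : Commute a (s * s) := hcomm_as.mul_right hcomm_as
    rw [hcomm_ass.eq]
    exact hmul
  have hsas : s * a * s = 1 := by
    calc s * a * s = s * (a * s) := mul_assoc _ _ _
      _ = s * (s * a) := by rw [hcomm_as.eq]
      _ = s * s * a := (mul_assoc _ _ _).symm
      _ = 1 := hmul
  have hUs : ∀ g : G, Commute ((U g : A)) s :=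
    fun g => commute_cfc_of_commute ha (hcomm_a g) f
  -- the unitary v
  obtain ⟨wu, hwu⟩ := hz_unit.star
  set v : A := z * s with hv_def
  have hsv : star v = s * star z := by
    rw [hv_def, star_mul, hs_sa.star_eq]
  have hzss : z * (s * s) * star z = 1 := by
    have h1 : (star z * z) * (s * s) = 1 := hmul'
    have hwu2 : (wu : A) * (z * (s * s)) = 1 := by
      rw [hwu, ← mul_assoc]; exact h1
    have h3' : z * (s * s) = ((wu⁻¹ : Aˣ) : A) :=
      (Units.inv_eq_of_mul_eq_one_right hwu2).symm
    rw [h3', ← hwu, Units.inv_mul]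
  have hvw : v * star v = 1 := by
    rw [hsv, hv_def]
    calc z * s * (s * star z) = z * (s * (s * star z)) := mul_assoc _ _ _
      _ = z * (s * s) * star z := by simp only [mul_assoc]
      _ = 1 := hzss
  have hwv : star v * v = 1 := by
    rw [hsv, hv_def]
    calc s * star z * (z * s) = s * (star z * z) * s := by simp only [mul_assoc]
      _ = s * a * s := by rw [ha_def]
      _ = 1 := hsas
  have hvmem : v ∈ unitary A := Unitary.mem_iff.mpr ⟨hwv, hvw⟩
  refine ⟨v, hvmem, fun g => ?_⟩
  have h1 : s * (U g : A) = (U g : A) * s := ((hUs g).symm).eq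
  have hfinal : v * (U g : A) * star v = (U' g : A) * (z * (s * s) * star z) := by
    rw [hsv, hv_def]
    calc z * s * (U g : A) * (s * star z)
        = z * (s * (U g : A)) * (s * star z) := by rw [mul_assoc z]
      _ = z * ((U g : A) * s) * (s * star z) := by rw [h1]
      _ = (z * (U g : A)) * (s * (s * star z)) := by simp only [mul_assoc]
      _ = ((U' g : A) * z) * (s * (s * star z)) := by rw [← key g]
      _ = (U' g : A) * (z * (s * s) * star z) := by simp only [mul_assoc]
  rw [hfinal, hzss, mul_one]
end

section
/- The set of norm-continuous representations of a compact group in a unital C*-algebra is locally an analytic retract of the ambient Banach space (the key content of its being a real-analytic Banach submanifold): let G be a compact topological group, A a unital C*-algebra, and R ⊆ C(G, A) the set of norm-continuous representations of G in A. Then for every U ∈ R there exist an open neighborhood 𝒰 of U in C(G, A) and a map r : 𝒰 → C(G, A), analytic on 𝒰 as a map between real Banach spaces, such that r(f) ∈ R for every f ∈ 𝒰 and r(f) = f for every f ∈ R ∩ 𝒰. -/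
/-- A continuous map `f : C(G, A)` "is a norm-continuous representation of `G` in `A`":
it is unitary-valued, unital and multiplicative. -/
def IsUnitaryRep {G : Type*} [Group G] [TopologicalSpace G]
    {A : Type*} [NormedRing A] [StarRing A] [CStarRing A] [NormedAlgebra ℂ A]
    [CompleteSpace A] [StarModule ℂ A] (f : C(G, A)) : Prop :=
  (∀ g : G, f g ∈ unitary A) ∧ f 1 = 1 ∧ ∀ g h : G, f (g * h) = f g * f h


set_option linter.unusedSectionVars false
set_option maxHeartbeats 1000000

noncomputable section
namespace RepRetractAux
open MeasureTheory Finset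

open Finset

lemma centralBinom_conv (n : ℕ) :
    ∑ i ∈ Finset.range (n + 1),
      ((Nat.centralBinom i : ℝ) * (Nat.centralBinom (n - i) : ℝ)) = 4 ^ n := by
  set b : ℕ → ℝ := fun j => (Nat.centralBinom j : ℝ) with hb
  have refl : ∀ (m : ℕ) (w : ℕ → ℝ),
      ∑ i ∈ Finset.range (m + 1), w i * (b i * b (m - i))
        = ∑ i ∈ Finset.range (m + 1), w (m - i) * (b i * b (m - i)) := by
    intro m w
    rw [← Finset.sum_range_reflect]
    refine Finset.sum_congr rfl fun i hi => ?_
    have hi' : i ≤ m := Nat.lt_succ_iff.mp (Finset.mem_range.mp hi)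
    have h1 : m + 1 - 1 - i = m - i := by omega
    have h2 : m - (m - i) = i := by omega
    rw [h1, h2]
    ring
  induction n with
  | zero => simp [hb]
  | succ n ih =>
    have hm : ((n + 1 : ℕ) : ℝ) ≠ 0 := Nat.cast_ne_zero.2 n.succ_ne_zero
    apply mul_left_cancel₀ hm
    have assoc1 : ∀ i : ℕ, b i * b (n + 1 - i) = b i * b (n + 1 - i) := fun _ => rfl
    have key : ((n + 1 : ℕ) : ℝ) * ∑ i ∈ Finset.range (n + 2), b i * b (n + 1 - i)
        = 4 * (((n + 1 : ℕ) : ℝ) * ∑ i ∈ Finset.range (n + 1), b i * b (n - i)) := by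
      have e1 : ((n + 1 : ℕ) : ℝ) * ∑ i ∈ Finset.range (n + 2), b i * b (n + 1 - i)
          = ∑ i ∈ Finset.range (n + 2),
              ((i : ℝ) + ((n + 1 - i : ℕ) : ℝ)) * (b i * b (n + 1 - i)) := by
        rw [Finset.mul_sum]
        refine Finset.sum_congr rfl fun i hi => ?_
        have hi' : i ≤ n + 1 := Nat.lt_succ_iff.mp (Finset.mem_range.mp hi)
        have hc : (i : ℝ) + ((n + 1 - i : ℕ) : ℝ) = ((n + 1 : ℕ) : ℝ) := by
          rw [Nat.cast_sub hi']
          push_cast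
          ring
        rw [hc]
      have e2 : ∑ i ∈ Finset.range (n + 2),
              ((i : ℝ) + ((n + 1 - i : ℕ) : ℝ)) * (b i * b (n + 1 - i))
          = 2 * ∑ i ∈ Finset.range (n + 2), (i : ℝ) * (b i * b (n + 1 - i)) := by
        simp_rw [add_mul]
        rw [Finset.sum_add_distrib, two_mul]
        congr 1
        exact (refl (n + 1) (fun i => (i : ℝ))).symm
      have e3 : ∑ i ∈ Finset.range (n + 2), (i : ℝ) * (b i * b (n + 1 - i))
          = ∑ j ∈ Finset.range (n + 1), (2 * (2 * (j : ℝ) + 1)) * (b j * b (n - j)) := by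
        rw [Finset.sum_range_succ']
        simp only [Nat.cast_zero, zero_mul, add_zero]
        refine Finset.sum_congr rfl fun j hj => ?_
        have hj' : j ≤ n := Nat.lt_succ_iff.mp (Finset.mem_range.mp hj)
        have hnj : n + 1 - (j + 1) = n - j := by omega
        rw [hnj]
        have e4 : ((j : ℝ) + 1) * b (j + 1) = 2 * (2 * (j : ℝ) + 1) * b j := by
          have h := congrArg (fun k : ℕ => (k : ℝ)) (Nat.succ_mul_centralBinom_succ j)
          push_cast at h
          simpa [hb] using h
        calc ((j + 1 : ℕ) : ℝ) * (b (j + 1) * b (n - j))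
            = (((j : ℝ) + 1) * b (j + 1)) * b (n - j) := by push_cast; ring
          _ = (2 * (2 * (j : ℝ) + 1) * b j) * b (n - j) := by rw [e4]
          _ = (2 * (2 * (j : ℝ) + 1)) * (b j * b (n - j)) := by ring
      have e5 : ∑ j ∈ Finset.range (n + 1), (2 * (2 * (j : ℝ) + 1)) * (b j * b (n - j))
          = 2 * ∑ j ∈ Finset.range (n + 1), (2 * (j : ℝ) + 1) * (b j * b (n - j)) := by
        rw [Finset.mul_sum]
        exact Finset.sum_congr rfl fun j _ => by ring
      have e6 : 2 * ∑ j ∈ Finset.range (n + 1), (2 * (j : ℝ) + 1) * (b j * b (n - j))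
          = (2 * (n : ℝ) + 2) * ∑ j ∈ Finset.range (n + 1), b j * b (n - j) := by
        rw [two_mul]
        nth_rewrite 2 [refl n (fun j => 2 * (j : ℝ) + 1)]
        rw [← Finset.sum_add_distrib, Finset.mul_sum]
        refine Finset.sum_congr rfl fun j hj => ?_
        have hj' : j ≤ n := Nat.lt_succ_iff.mp (Finset.mem_range.mp hj)
        rw [Nat.cast_sub hj']
        ring
      calc ((n + 1 : ℕ) : ℝ) * ∑ i ∈ Finset.range (n + 2), b i * b (n + 1 - i)
          = 2 * ∑ i ∈ Finset.range (n + 2), (i : ℝ) * (b i * b (n + 1 - i)) := by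
            rw [e1, e2]
        _ = 2 * (2 * ∑ j ∈ Finset.range (n + 1), (2 * (j : ℝ) + 1) * (b j * b (n - j))) := by
            rw [e3, e5]
        _ = 2 * ((2 * (n : ℝ) + 2) * ∑ j ∈ Finset.range (n + 1), b j * b (n - j)) := by
            rw [e6]
        _ = 4 * (((n + 1 : ℕ) : ℝ) * ∑ i ∈ Finset.range (n + 1), b i * b (n - i)) := by
            push_cast
            ring
    rw [key, ih]
    push_cast
    ring


/-- Coefficients of the binomial series `(1+t)^{-1/2}`. -/
def sqCoef (n : ℕ) : ℝ := (-1) ^ n * (Nat.centralBinom n : ℝ) / 4 ^ n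

lemma centralBinom_le_four_pow (n : ℕ) : (Nat.centralBinom n : ℝ) ≤ 4 ^ n := by
  have h : Nat.centralBinom n ≤ 4 ^ n := by
    have h1 : Nat.centralBinom n ≤ ∑ i ∈ Finset.range (2 * n + 1), Nat.choose (2 * n) i :=
      Finset.single_le_sum (f := fun i => Nat.choose (2 * n) i) (fun _ _ => Nat.zero_le _)
        (Finset.mem_range.2 (by omega))
    have h2 : ∑ i ∈ Finset.range (2 * n + 1), Nat.choose (2 * n) i = 2 ^ (2 * n) :=
      Nat.sum_range_choose (2 * n)
    calc Nat.centralBinom n ≤ 2 ^ (2 * n) := h1.trans_eq h2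
      _ = 4 ^ n := by rw [pow_mul]; norm_num
  calc (Nat.centralBinom n : ℝ) ≤ ((4 ^ n : ℕ) : ℝ) := Nat.cast_le.2 h
    _ = 4 ^ n := by push_cast; ring
lemma abs_sqCoef_le (n : ℕ) : |sqCoef n| ≤ 1 := by
  rw [sqCoef, abs_div, abs_mul, abs_pow, abs_neg, abs_one, one_pow, one_mul]
  rw [abs_of_nonneg (by positivity : (0:ℝ) ≤ (Nat.centralBinom n : ℝ)),
    abs_of_nonneg (by positivity : (0:ℝ) ≤ (4:ℝ) ^ n)]
  rw [div_le_one (by positivity)]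
  exact centralBinom_le_four_pow n


lemma sqCoef_conv (n : ℕ) :
    ∑ i ∈ Finset.range (n + 1), sqCoef i * sqCoef (n - i) = (-1) ^ n := by
  have key : ∀ i ∈ Finset.range (n + 1), sqCoef i * sqCoef (n - i)
      = ((-1) ^ n / 4 ^ n) * ((Nat.centralBinom i : ℝ) * (Nat.centralBinom (n - i) : ℝ)) := by
    intro i hi
    have hi' : i ≤ n := Nat.lt_succ_iff.mp (Finset.mem_range.mp hi)
    have h4 : (4:ℝ) ^ i * 4 ^ (n - i) = 4 ^ n := by rw [← pow_add]; congr 1; omega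
    have hs : (-1:ℝ) ^ i * (-1) ^ (n - i) = (-1) ^ n := by rw [← pow_add]; congr 1; omega
    rw [sqCoef, sqCoef]
    calc (-1:ℝ) ^ i * (Nat.centralBinom i : ℝ) / 4 ^ i
          * ((-1) ^ (n - i) * (Nat.centralBinom (n - i) : ℝ) / 4 ^ (n - i))
        = (((-1:ℝ) ^ i * (-1) ^ (n - i))
            * ((Nat.centralBinom i : ℝ) * (Nat.centralBinom (n - i) : ℝ)))
          / ((4:ℝ) ^ i * 4 ^ (n - i)) := by ring
      _ = ((-1) ^ n / 4 ^ n) * ((Nat.centralBinom i : ℝ) * (Nat.centralBinom (n - i) : ℝ)) := by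
          rw [hs, h4]; ring
  rw [Finset.sum_congr rfl key, ← Finset.mul_sum, centralBinom_conv,
    div_mul_cancel₀ _ (by positivity : ((4:ℝ) ^ n) ≠ 0)]

variable {A : Type*} [NormedRing A] [StarRing A] [CStarRing A] [NormedAlgebra ℂ A]
    [CompleteSpace A] [StarModule ℂ A] [Nontrivial A]

/-- `x ↦ (1 + (x-1))^{-1/2}` defined by the binomial series. -/
def sqrtInv (x : A) : A := ∑' n : ℕ, sqCoef n • (x - 1) ^ n

lemma norm_term_le (y : A) (n : ℕ) : ‖sqCoef n • y ^ n‖ ≤ ‖y‖ ^ n := by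
  rw [norm_smul]
  calc ‖sqCoef n‖ * ‖y ^ n‖ ≤ 1 * ‖y‖ ^ n :=
    mul_le_mul (by simpa using abs_sqCoef_le n) (norm_pow_le y n) (norm_nonneg _) zero_le_one
  _ = ‖y‖ ^ n := one_mul _

lemma summable_sqrtInv {x : A} (hx : ‖x - 1‖ < 1) :
    Summable (fun n : ℕ => sqCoef n • (x - 1) ^ n) :=
  Summable.of_norm_bounded (summable_geometric_of_lt_one (norm_nonneg _) hx)
    (norm_term_le (x - 1))

lemma analyticOnNhd_sqrtInv :
    AnalyticOnNhd ℝ (sqrtInv (A := A)) {x : A | ‖x - 1‖ < 1} := by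
  set p : FormalMultilinearSeries ℝ A A := FormalMultilinearSeries.ofScalars A sqCoef with hp
  have hrad : 1 ≤ p.radius := by
    refine p.le_radius_of_bound 1 fun n => ?_
    rw [NNReal.coe_one, one_pow, mul_one, hp, FormalMultilinearSeries.ofScalars_norm]
    simpa using abs_sqCoef_le n
  have hball : HasFPowerSeriesOnBall p.sum p 0 p.radius :=
    p.hasFPowerSeriesOnBall (lt_of_lt_of_le one_pos hrad)
  have hsum : AnalyticOnNhd ℝ p.sum (EMetric.ball (0 : A) p.radius) :=
    hball.analyticOnNhd
  intro x hx
  have hx' : ‖x - 1‖ < 1 := hx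
  have hmem : x - 1 ∈ EMetric.ball (0 : A) p.radius := by
    refine lt_of_lt_of_le ?_ hrad
    show edist (x - 1) (0 : A) < 1
    rw [edist_dist, dist_zero_right]
    exact_mod_cast ENNReal.ofReal_lt_one.2 hx'
  have h1 : AnalyticAt ℝ p.sum (x - 1) := hsum _ hmem
  have h2 : AnalyticAt ℝ (fun y : A => y - 1) x := analyticAt_id.sub analyticAt_const
  have h3 : AnalyticAt ℝ (fun y : A => p.sum (y - 1)) x := AnalyticAt.comp (f := fun y : A => y - 1) h1 h2
  have heq : (fun y : A => p.sum (y - 1)) = sqrtInv := by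
    funext y
    rw [sqrtInv, FormalMultilinearSeries.sum]
    exact tsum_congr fun n => FormalMultilinearSeries.ofScalars_apply_eq _ _ _
  rwa [heq] at h3

lemma commute_sqrtInv {x y : A} (h : Commute y x) : Commute y (sqrtInv x) :=
  Commute.tsum_right y fun n =>
    (((h.sub_right (Commute.one_right y)).pow_right n).smul_right (sqCoef n))

lemma star_sqrtInv {x : A} (hx : IsSelfAdjoint x) : star (sqrtInv x) = sqrtInv x := by
  rw [sqrtInv, tsum_star]
  refine tsum_congr fun n => ?_
  rw [star_smul, star_pow, star_sub, star_one, hx.star_eq, star_trivial]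

lemma geom_summable {x : A} (hx : ‖x - 1‖ < 1) : Summable (fun n : ℕ => (1 - x) ^ n) := by
  have h : ‖1 - x‖ < 1 := by rwa [← norm_neg, neg_sub]
  exact summable_geometric_of_norm_lt_one h

lemma sqrtInv_sq {x : A} (hx : ‖x - 1‖ < 1) :
    sqrtInv x * sqrtInv x = ∑' n : ℕ, (1 - x) ^ n := by
  have hs : Summable (fun n : ℕ => ‖sqCoef n • (x - 1) ^ n‖) := by
    refine Summable.of_nonneg_of_le (fun n => norm_nonneg _) (norm_term_le (x - 1))
      (summable_geometric_of_lt_one (norm_nonneg _) hx)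
  rw [sqrtInv, tsum_mul_tsum_eq_tsum_sum_antidiagonal_of_summable_norm hs hs]
  refine tsum_congr fun n => ?_
  have key : ∀ p ∈ Finset.HasAntidiagonal.antidiagonal n,
      (sqCoef p.1 • (x - 1) ^ p.1) * (sqCoef p.2 • (x - 1) ^ p.2)
        = (sqCoef p.1 * sqCoef p.2) • (x - 1) ^ n := by
    intro p hp
    rw [smul_mul_smul_comm, ← pow_add, Finset.HasAntidiagonal.mem_antidiagonal.mp hp]
  rw [Finset.sum_congr rfl key, ← Finset.sum_smul,
    Finset.Nat.sum_antidiagonal_eq_sum_range_succ (fun i j => sqCoef i * sqCoef j),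
    sqCoef_conv, ← smul_pow, neg_smul, one_smul, neg_sub]

lemma geom_mul_self {x : A} (hx : ‖x - 1‖ < 1) : (∑' n : ℕ, (1 - x) ^ n) * x = 1 := by
  have h : ‖1 - x‖ < 1 := by rwa [← norm_neg, neg_sub]
  have := geom_series_mul_neg (1 - x) h
  rwa [sub_sub_cancel] at this

lemma self_mul_geom {x : A} (hx : ‖x - 1‖ < 1) : x * (∑' n : ℕ, (1 - x) ^ n) = 1 := by
  have hc : Commute x (∑' n : ℕ, (1 - x) ^ n) :=
    Commute.tsum_right x fun n => ((Commute.one_right x).sub_right (Commute.refl x)).pow_right n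
  rw [hc.eq]
  exact geom_mul_self hx

lemma sqrtInv_sq_mul_self {x : A} (hx : ‖x - 1‖ < 1) :
    sqrtInv x * sqrtInv x * x = 1 := by rw [sqrtInv_sq hx]; exact geom_mul_self hx

lemma self_mul_sqrtInv_sq {x : A} (hx : ‖x - 1‖ < 1) :
    x * (sqrtInv x * sqrtInv x) = 1 := by rw [sqrtInv_sq hx]; exact self_mul_geom hx


variable {G : Type*} [Group G] [TopologicalSpace G] [IsTopologicalGroup G] [CompactSpace G]
variable {A : Type*} [NormedRing A] [StarRing A] [CStarRing A] [NormedAlgebra ℂ A]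
    [CompleteSpace A] [StarModule ℂ A]


instance : IsTopologicalGroup (SeparationQuotient G) := ⟨⟩
instance : CompactSpace (SeparationQuotient G) := Quotient.compactSpace

variable (G) in
abbrev Q := SeparationQuotient G

instance : MeasurableSpace (Q G) := borel _
instance : BorelSpace (Q G) := ⟨rfl⟩

variable (G) in
def K0 : TopologicalSpace.PositiveCompacts (Q G) :=
  ⟨⟨Set.univ, isCompact_univ⟩, by simp [interior_univ]⟩

variable (G) in
def mu : Measure (Q G) := Measure.haarMeasure (K0 G)

instance : IsProbabilityMeasure (mu G) :=
  ⟨by rw [mu, ← TopologicalSpace.Compacts.coe_mk (Set.univ) isCompact_univ]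
      exact Measure.haarMeasure_self⟩

instance : (mu G).IsMulLeftInvariant := Measure.isMulLeftInvariant_haarMeasure _

/-- Lift of a continuous map to the separation quotient. -/
def liftCM (f : C(G, A)) : C(Q G, A) :=
  ⟨SeparationQuotient.lift f (fun _ _ h => (h.map (map_continuous f)).eq),
    SeparationQuotient.continuous_lift (map_continuous f)⟩

@[simp] lemma liftCM_mk (f : C(G, A)) (g : G) :
    liftCM f (SeparationQuotient.mk g) = f g := rfl

lemma integrable_cm (φ : C(Q G, A)) : Integrable φ (mu G) :=
  (map_continuous φ).integrable_of_hasCompactSupport (HasCompactSupport.of_compactSpace _)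

/-- The averaged intertwiner. -/
def aFun (U f : C(G, A)) : A := ∫ x, (liftCM f * star (liftCM U)) x ∂(mu G)

lemma aFun_self (U : C(G, A)) (hU : IsUnitaryRep U) : aFun U U = 1 := by
  have h : (liftCM U * star (liftCM U) : C(Q G, A)) = 1 := by
    ext x
    obtain ⟨g, rfl⟩ := SeparationQuotient.surjective_mk x
    simpa using Unitary.mul_star_self_of_mem (hU.1 g)
  rw [aFun, h]
  simp

lemma norm_aFun_le [Nontrivial A] (U f : C(G, A)) (hU : IsUnitaryRep U) : ‖aFun U f‖ ≤ ‖f‖ := by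
  refine (norm_integral_le_of_norm_le_const (C := ‖f‖) ?_).trans (by simp)
  refine Filter.Eventually.of_forall fun x => ?_
  obtain ⟨g, rfl⟩ := SeparationQuotient.surjective_mk x
  calc ‖(liftCM f * star (liftCM U)) (SeparationQuotient.mk g)‖
      ≤ ‖f g‖ * ‖star (U g)‖ := norm_mul_le (f g) (star (U g))
    _ ≤ ‖f‖ * 1 := by
        rw [norm_star, CStarRing.norm_of_mem_unitary (hU.1 g)]
        exact mul_le_mul_of_nonneg_right (f.norm_coe_le_norm g) zero_le_one
    _ = ‖f‖ := mul_one _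


variable {G : Type*} [Group G] [TopologicalSpace G] [IsTopologicalGroup G] [CompactSpace G]
variable {A : Type*} [NormedRing A] [StarRing A] [CStarRing A] [NormedAlgebra ℂ A]
    [CompleteSpace A] [StarModule ℂ A]

lemma star_apply_rep {f : C(G, A)} (hf : IsUnitaryRep f) (g : G) : star (f g) = f g⁻¹ := by
  have h2 : f g * f g⁻¹ = 1 := by rw [← hf.2.2]; simp [hf.2.1]
  calc star (f g) = star (f g) * (f g * f g⁻¹) := by rw [h2, mul_one]
    _ = star (f g) * f g * f g⁻¹ := by rw [mul_assoc]
    _ = f g⁻¹ := by rw [Unitary.star_mul_self_of_mem (hf.1 g), one_mul]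

/-- `aFun U` as a real-linear map. -/
def aLM (U : C(G, A)) : C(G, A) →ₗ[ℝ] A where
  toFun := aFun U
  map_add' f f' := by
    have h : (liftCM (f + f') * star (liftCM U) : C(Q G, A))
        = liftCM f * star (liftCM U) + liftCM f' * star (liftCM U) := by
      ext x
      obtain ⟨g, rfl⟩ := SeparationQuotient.surjective_mk x
      simp [liftCM, add_mul]
    rw [aFun, h]
    exact integral_add (integrable_cm _) (integrable_cm _)
  map_smul' r f := by
    have h : (liftCM (r • f) * star (liftCM U) : C(Q G, A))
        = r • (liftCM f * star (liftCM U)) := by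
      ext x
      obtain ⟨g, rfl⟩ := SeparationQuotient.surjective_mk x
      simp [liftCM, smul_mul_assoc]
    show aFun U (r • f) = r • aFun U f
    rw [aFun, h]
    simpa [aFun] using integral_smul r (fun x => (liftCM f * star (liftCM U) : C(Q G, A)) x)

lemma aLM_apply (U f : C(G, A)) : aLM U f = aFun U f := rfl

lemma intertwine {U f : C(G, A)} (hU : IsUnitaryRep U) (hf : IsUnitaryRep f) (g : G) :
    f g * aFun U f = aFun U f * U g := by
  set φ : C(Q G, A) := liftCM f * star (liftCM U) with hφ
  have h1 : f g * aFun U f = ∫ x, f g * φ x ∂(mu G) :=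
    ((ContinuousLinearMap.mul ℝ A (f g)).integral_comp_comm (integrable_cm φ)).symm
  have h2 : aFun U f * U g = ∫ x, φ x * U g ∂(mu G) :=
    (((ContinuousLinearMap.mul ℝ A).flip (U g)).integral_comp_comm (integrable_cm φ)).symm
  rw [h1, h2]
  set c := SeparationQuotient.mk g with hc
  set χ : Q G → A := fun x => liftCM f x * star (liftCM U (c⁻¹ * x)) with hχ
  have key1 : (fun x => f g * φ x) = fun x => χ (c * x) := by
    funext x
    obtain ⟨h, rfl⟩ := SeparationQuotient.surjective_mk x
    show f g * (f h * star (U h)) = liftCM f (c * SeparationQuotient.mk h)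
        * star (liftCM U (c⁻¹ * (c * SeparationQuotient.mk h)))
    rw [inv_mul_cancel_left]
    show f g * (f h * star (U h)) = f (g * h) * star (U h)
    rw [hf.2.2, mul_assoc]
  have key2 : χ = fun x => φ x * U g := by
    funext x
    obtain ⟨h, rfl⟩ := SeparationQuotient.surjective_mk x
    show f h * star (U (g⁻¹ * h)) = f h * star (U h) * U g
    have : star (U (g⁻¹ * h)) = star (U h) * U g := by
      rw [hU.2.2, star_mul, star_apply_rep hU g⁻¹, inv_inv]
    rw [this, mul_assoc]
  rw [key1, ← key2]
  exact integral_mul_left_eq_self χ c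

lemma star_intertwine {U f : C(G, A)} (hU : IsUnitaryRep U) (hf : IsUnitaryRep f) (g : G) :
    star (aFun U f) * f g = U g * star (aFun U f) := by
  have h := congrArg star (intertwine hU hf g⁻¹)
  rw [star_mul, star_mul] at h
  simp only [star_apply_rep hU, star_apply_rep hf, inv_inv] at h
  exact h


variable {G : Type*} [Group G] [TopologicalSpace G] [IsTopologicalGroup G] [CompactSpace G]
variable {A : Type*} [NormedRing A] [StarRing A] [CStarRing A] [NormedAlgebra ℂ A]
    [CompleteSpace A] [StarModule ℂ A] [Nontrivial A]

/-- Pointwise conjugation-type map `(x, y) ↦ (g ↦ x * U g * y)`. -/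
def conjFun (U : C(G, A)) (x y : A) : C(G, A) :=
  ContinuousMap.const G x * U * ContinuousMap.const G y

@[simp] lemma conjFun_apply (U : C(G, A)) (x y : A) (g : G) :
    conjFun U x y g = x * U g * y := rfl

lemma conjFun_norm_le (U : C(G, A)) (x y : A) : ‖conjFun U x y‖ ≤ ‖U‖ * ‖x‖ * ‖y‖ := by
  refine (ContinuousMap.norm_le _ (by positivity)).2 fun g => ?_
  calc ‖x * U g * y‖ ≤ ‖x * U g‖ * ‖y‖ := norm_mul_le _ _
    _ ≤ ‖x‖ * ‖U g‖ * ‖y‖ :=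
        mul_le_mul_of_nonneg_right (norm_mul_le _ _) (norm_nonneg _)
    _ ≤ ‖x‖ * ‖U‖ * ‖y‖ := by
        have := U.norm_coe_le_norm g
        gcongr
    _ = ‖U‖ * ‖x‖ * ‖y‖ := by ring

/-- The conjugation map as a continuous bilinear map. -/
def conjCLM (U : C(G, A)) : A →L[ℝ] A →L[ℝ] C(G, A) :=
  LinearMap.mkContinuous₂
    (LinearMap.mk₂ ℝ (conjFun U)
      (fun x x' y => by ext g; simp [add_mul])
      (fun r x y => by ext g; simp [smul_mul_assoc])
      (fun x y y' => by ext g; simp [mul_add])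
      (fun r x y => by ext g; simp [mul_smul_comm]))
    ‖U‖ (fun x y => conjFun_norm_le U x y)

@[simp] lemma conjCLM_apply (U : C(G, A)) (x y : A) (g : G) :
    conjCLM U x y g = x * U g * y := rfl

/-- `star` as a real-continuous-linear map on `A`. -/
def starCLM : A →L[ℝ] A :=
  LinearMap.mkContinuous
    { toFun := star
      map_add' := star_add
      map_smul' := fun r x => by
        simp only [RingHom.id_apply]
        rw [show r • x = (r : ℂ) • x from (Complex.coe_smul r x).symm,
          show r • star x = (r : ℂ) • star x from (Complex.coe_smul r (star x)).symm,
          star_smul, Complex.star_def, Complex.conj_ofReal] }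
    1 (fun x => by simp)

@[simp] lemma starCLM_apply (x : A) : (starCLM : A →L[ℝ] A) x = star x := rfl


section UnitaryAlgebra

variable {A : Type*} [NormedRing A] [StarRing A] [CStarRing A] [NormedAlgebra ℂ A]
    [CompleteSpace A] [StarModule ℂ A] [Nontrivial A]

lemma aT_eq {a b : A} (hab : a * b = 1) (_hba : b * a = 1)
    (hp : ‖star a * a - 1‖ < 1) :
    a * (sqrtInv (star a * a) * sqrtInv (star a * a)) = star b := by
  set T := sqrtInv (star a * a) * sqrtInv (star a * a) with hT
  have hsb : star b * star a = 1 := by rw [← star_mul, hab, star_one]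
  have h5 : star a * (a * T) = 1 := by
    rw [← mul_assoc]; exact self_mul_sqrtInv_sq hp
  calc a * T = (star b * star a) * (a * T) := by rw [hsb, one_mul]
    _ = star b * (star a * (a * T)) := by rw [mul_assoc]
    _ = star b := by rw [h5, mul_one]

lemma uu_mem_unitary {a b : A} (hab : a * b = 1) (hba : b * a = 1)
    (hp : ‖star a * a - 1‖ < 1) :
    a * sqrtInv (star a * a) ∈ unitary A := by
  set p : A := star a * a with hpdef
  set s : A := sqrtInv p with hs
  have hsa : IsSelfAdjoint p := IsSelfAdjoint.star_mul_self a
  have hstar_s : star s = s := star_sqrtInv hsa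
  have hcomm : Commute p s := commute_sqrtInv (Commute.refl p)
  rw [Unitary.mem_iff]
  constructor
  · have h1 : star (a * s) * (a * s) = s * (p * s) := by
      rw [star_mul, hstar_s]
      calc s * star a * (a * s) = s * (star a * a * s) := by
            rw [mul_assoc, mul_assoc]
        _ = s * (p * s) := by rw [← hpdef]
    rw [h1, hcomm.eq, ← mul_assoc]
    exact sqrtInv_sq_mul_self hp
  · have h6 : a * (s * s) = star b := aT_eq hab hba hp
    have hba' : star b * star a = 1 := by rw [← star_mul, hab, star_one]
    calc a * s * star (a * s) = a * s * (s * star a) := by rw [star_mul, hstar_s]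
      _ = a * (s * s) * star a := by rw [mul_assoc, mul_assoc, mul_assoc]
      _ = star b * star a := by rw [h6]
      _ = 1 := hba'

end UnitaryAlgebra

end RepRetractAux
end
open RepRetractAux

/-- **Norm-continuous representations form a locally analytically retractible subset**
of `C(G, A)` (the key content of being a real-analytic Banach submanifold): every
norm-continuous representation `U` of the compact group `G` in the unital C*-algebra
`A` has an open neighborhood `𝒰` in `C(G, A)` carrying a real-analytic map
`r : 𝒰 → C(G, A)` taking values in the set `R` of norm-continuous representations and
restricting to the identity on `R ∩ 𝒰`. -/
theorem rep_cstar_locally_analytic_retract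
    {G : Type*} [Group G] [TopologicalSpace G] [IsTopologicalGroup G] [CompactSpace G]
    {A : Type*} [NormedRing A] [StarRing A] [CStarRing A] [NormedAlgebra ℂ A]
    [CompleteSpace A] [StarModule ℂ A]
    (U : C(G, A)) (hU : IsUnitaryRep U) :
    ∃ 𝒰 : Set C(G, A), IsOpen 𝒰 ∧ U ∈ 𝒰 ∧
      ∃ r : C(G, A) → C(G, A),
        AnalyticOn ℝ r 𝒰 ∧
        (∀ f ∈ 𝒰, IsUnitaryRep (r f)) ∧
        (∀ f ∈ {f : C(G, A) | IsUnitaryRep f} ∩ 𝒰, r f = f) := by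
  classical
  rcases subsingleton_or_nontrivial A with hA | hA
  · refine ⟨Set.univ, isOpen_univ, trivial, id, ?_, ?_, ?_⟩
    · exact fun x _ => analyticAt_id.analyticWithinAt
    · intro f _
      refine ⟨fun g => ?_, Subsingleton.elim _ _, fun g h => Subsingleton.elim _ _⟩
      have hfg : (id f : C(G, A)) g = 1 := Subsingleton.elim _ _
      rw [hfg]
      exact one_mem (unitary A)
    · intro f _
      rfl
  · set 𝒰 : Set C(G, A) := Metric.ball U (1/4) with h𝒰
    let aC : C(G, A) →L[ℝ] A :=
      LinearMap.mkContinuous (aLM U) 1 (fun f => by simpa [aLM_apply] using norm_aFun_le U f hU)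
    have aC_apply : ∀ f : C(G, A), aC f = aFun U f := fun f => rfl
    let uu : C(G, A) → A := fun f => aC f * sqrtInv (star (aC f) * aC f)
    let r : C(G, A) → C(G, A) := fun f => conjCLM U (uu f) (star (uu f))
    have r_apply : ∀ (f : C(G, A)) (g : G), r f g = uu f * U g * star (uu f) :=
      fun f g => rfl
    have key_norm : ∀ f ∈ 𝒰, ‖aFun U f - 1‖ < 1/4 := by
      intro f hf
      have h1 : aFun U f - 1 = aLM U (f - U) := by
        rw [map_sub, aLM_apply, aLM_apply, aFun_self U hU]
      rw [h1, aLM_apply]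
      calc ‖aFun U (f - U)‖ ≤ ‖f - U‖ := norm_aFun_le U _ hU
        _ < 1/4 := by rw [← dist_eq_norm]; exact Metric.mem_ball.mp hf
    have key_p : ∀ f ∈ 𝒰, ‖star (aFun U f) * aFun U f - 1‖ < 1 := by
      intro f hf
      have ha : ‖aFun U f - 1‖ < 1/4 := key_norm f hf
      set a := aFun U f with hadef
      have hna : ‖a‖ ≤ 5/4 := by
        calc ‖a‖ = ‖a - 1 + 1‖ := by rw [sub_add_cancel]
          _ ≤ ‖a - 1‖ + ‖(1 : A)‖ := norm_add_le _ _
          _ ≤ 5/4 := by rw [norm_one]; linarith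
      have hdecomp : star a * a - 1 = star a * (a - 1) + (star a - 1) := by noncomm_ring
      have hstar1 : star a - 1 = star (a - 1) := by rw [star_sub, star_one]
      calc ‖star a * a - 1‖ ≤ ‖star a * (a - 1)‖ + ‖star a - 1‖ := by
            rw [hdecomp]; exact norm_add_le _ _
        _ ≤ ‖star a‖ * ‖a - 1‖ + ‖star a - 1‖ := add_le_add (norm_mul_le _ _) le_rfl
        _ = ‖a‖ * ‖a - 1‖ + ‖a - 1‖ := by rw [hstar1, norm_star, norm_star]
        _ ≤ (5/4) * (1/4) + 1/4 :=
            add_le_add (mul_le_mul hna ha.le (norm_nonneg _) (by norm_num)) ha.le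
        _ < 1 := by norm_num
    have key_unit : ∀ f ∈ 𝒰, ∃ b : A, aFun U f * b = 1 ∧ b * aFun U f = 1 := by
      intro f hf
      have h : ‖1 - aFun U f‖ < 1 := by
        rw [norm_sub_rev]
        linarith [key_norm f hf]
      have hiu : IsUnit (aFun U f) :=
        sub_sub_self 1 (aFun U f) ▸ (Units.oneSub (1 - aFun U f) h).isUnit
      obtain ⟨w, hw⟩ := hiu
      exact ⟨↑w⁻¹, by rw [← hw]; exact w.mul_inv, by rw [← hw]; exact w.inv_mul⟩
    refine ⟨𝒰, Metric.isOpen_ball, Metric.mem_ball_self (by norm_num), r, ?_, ?_, ?_⟩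
    · -- analyticity
      refine AnalyticOnNhd.analyticOn ?_
      intro f hf
      have h_a : AnalyticAt ℝ (fun f : C(G, A) => aC f) f := aC.analyticAt f
      have h_stara : AnalyticAt ℝ (fun f : C(G, A) => star (aC f)) f :=
        ((starCLM (A := A)).analyticAt (aC f)).comp h_a
      have h_p : AnalyticAt ℝ (fun f : C(G, A) => star (aC f) * aC f) f := h_stara.mul h_a
      have h_sq : AnalyticAt ℝ (fun f : C(G, A) => sqrtInv (star (aC f) * aC f)) f := by
        have h1 : AnalyticAt ℝ sqrtInv (star (aC f) * aC f) :=
          analyticOnNhd_sqrtInv _ (key_p f hf)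
        exact AnalyticAt.comp (f := fun f : C(G, A) => star (aC f) * aC f) h1 h_p
      have h_u : AnalyticAt ℝ uu f := h_a.mul h_sq
      have h_su : AnalyticAt ℝ (fun f : C(G, A) => star (uu f)) f :=
        ((starCLM (A := A)).analyticAt (uu f)).comp h_u
      exact ((conjCLM U).analyticAt_bilinear (uu f, star (uu f))).comp₂ h_u h_su
    · -- values are representations
      intro f hf
      obtain ⟨b, hab, hba⟩ := key_unit f hf
      have huu : uu f ∈ unitary A := uu_mem_unitary hab hba (key_p f hf)
      have h1 : star (uu f) * uu f = 1 := Unitary.star_mul_self_of_mem huu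
      refine ⟨fun g => ?_, ?_, fun g h => ?_⟩
      · rw [r_apply]
        exact mul_mem (mul_mem huu (hU.1 g)) (Unitary.star_mem huu)
      · rw [r_apply, hU.2.1, mul_one]
        exact Unitary.mul_star_self_of_mem huu
      · rw [r_apply, r_apply, r_apply, hU.2.2]
        have e : (uu f * U g * star (uu f)) * (uu f * U h * star (uu f))
            = uu f * U g * ((star (uu f) * uu f) * (U h * star (uu f))) := by
          noncomm_ring
        rw [e, h1, one_mul]
        noncomm_ring
    · -- retraction property
      rintro f ⟨hfrep, hf𝒰⟩
      obtain ⟨b, hab, hba⟩ := key_unit f hf𝒰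
      have hp' : ‖star (aFun U f) * aFun U f - 1‖ < 1 := key_p f hf𝒰
      ext g
      rw [r_apply]
      set a := aFun U f with hadef
      set s : A := sqrtInv (star a * a) with hsdef
      have hsa : IsSelfAdjoint (star a * a) := IsSelfAdjoint.star_mul_self a
      have hstar_s : star s = s := star_sqrtInv hsa
      have h_int : f g * a = a * U g := intertwine hU hfrep g
      have h_sint : star a * f g = U g * star a := star_intertwine hU hfrep g
      have hUp : Commute (U g) (star a * a) := by
        show U g * (star a * a) = (star a * a) * U g
        calc U g * (star a * a) = (U g * star a) * a := by noncomm_ring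
          _ = (star a * f g) * a := by rw [← h_sint]
          _ = star a * (f g * a) := by noncomm_ring
          _ = star a * (a * U g) := by rw [h_int]
          _ = (star a * a) * U g := by noncomm_ring
      have hUs : Commute (U g) s := commute_sqrtInv hUp
      have hUT : Commute (U g) (s * s) := hUs.mul_right hUs
      have h6 : a * (s * s) = star b := aT_eq hab hba hp'
      have hsb : star b * star a = 1 := by rw [← star_mul, hab, star_one]
      have huu_eq : uu f = a * s := rfl
      rw [huu_eq]
      calc a * s * U g * star (a * s)
          = a * (s * U g) * (s * star a) := by rw [star_mul, hstar_s]; noncomm_ring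
        _ = a * (U g * s) * (s * star a) := by rw [← hUs.eq]
        _ = a * (U g * (s * s)) * star a := by noncomm_ring
        _ = a * ((s * s) * U g) * star a := by rw [hUT.eq]
        _ = (a * (s * s)) * (U g * star a) := by noncomm_ring
        _ = star b * (star a * f g) := by rw [h6, ← h_sint]
        _ = (star b * star a) * f g := by noncomm_ring
        _ = f g := by rw [hsb, one_mul]
end

section
/- Local homogeneity for Banach-space representations: let G be a compact topological group, E a complex Banach space, and ρ a norm-continuous representation of G on E. Then there exists ε > 0 such that for every norm-continuous representation ρ' of G on E with sup_{g ∈ G} ‖ρ'(g) − ρ(g)‖ < ε there is an invertible bounded operator V ∈ GL(E) with ρ'(g) = V ρ(g) V⁻¹ for all g ∈ G. In particular, the orbit of ρ under conjugation by GL(E) is open in the set of norm-continuous representations with the supremum metric. -/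
open MeasureTheory TopologicalSpace

/-- **Local homogeneity for Banach-space representations.**
For a norm-continuous representation `ρ` of a compact group `G` on a complex Banach
space `E` there is `ε > 0` such that every norm-continuous representation `ρ'` of `G`
on `E` with `⨆ g, ‖ρ' g − ρ g‖ < ε` is conjugate to `ρ` by an invertible bounded
operator `V ∈ GL(E)`: `ρ' g = V * ρ g * V⁻¹` for all `g`.  (In particular the
`GL(E)`-conjugation orbit of `ρ` is open among norm-continuous representations in the
supremum metric.) -/
theorem locally_homogeneous_rep_banach
    {G : Type*} [Group G] [TopologicalSpace G] [IsTopologicalGroup G] [CompactSpace G]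
    {E : Type*} [NormedAddCommGroup E] [NormedSpace ℂ E] [CompleteSpace E]
    (ρ : G →* (E →L[ℂ] E)ˣ) (hρ : Continuous fun g : G => (ρ g : E →L[ℂ] E)) :
    ∃ ε > (0 : ℝ), ∀ ρ' : G →* (E →L[ℂ] E)ˣ,
      (Continuous fun g : G => (ρ' g : E →L[ℂ] E)) →
      (⨆ g : G, ‖(ρ' g : E →L[ℂ] E) - (ρ g : E →L[ℂ] E)‖) < ε →
      ∃ V : (E →L[ℂ] E)ˣ, ∀ g : G,
        (ρ' g : E →L[ℂ] E) = (V : E →L[ℂ] E) * (ρ g : E →L[ℂ] E) * ((V⁻¹ : (E →L[ℂ] E)ˣ) : E →L[ℂ] E) := by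
  classical
  haveI : Nonempty G := ⟨1⟩
  borelize G
  borelize (E →L[ℂ] E)
  -- continuity of `g ↦ ρ (g⁻¹)`
  have hρinv : Continuous fun g : G => (ρ g⁻¹ : (E →L[ℂ] E)) := hρ.comp continuous_inv
  -- a uniform bound `M` on `‖ρ (g⁻¹)‖`
  obtain ⟨M, hM⟩ : ∃ M : ℝ, ∀ g : G, ‖(ρ g⁻¹ : (E →L[ℂ] E))‖ ≤ M := by
    obtain ⟨M, hM⟩ := (isCompact_range (hρinv.norm)).bddAbove
    exact ⟨M, fun g => hM ⟨g, rfl⟩⟩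
  have hM0 : (0 : ℝ) ≤ M := le_trans (norm_nonneg _) (hM 1)
  refine ⟨1 / (M + 1), by positivity, fun ρ' hρ' hsup => ?_⟩
  set δ := ⨆ g : G, ‖(ρ' g : (E →L[ℂ] E)) - (ρ g : (E →L[ℂ] E))‖ with hδ
  have hpt : ∀ g : G, ‖(ρ' g : (E →L[ℂ] E)) - (ρ g : (E →L[ℂ] E))‖ ≤ δ := by
    intro g
    have hbdd : BddAbove (Set.range fun g : G => ‖(ρ' g : E →L[ℂ] E) - (ρ g : E →L[ℂ] E)‖) :=
      (isCompact_range ((hρ'.sub hρ).norm)).bddAbove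
    exact le_ciSup hbdd g
  have hδ0 : (0 : ℝ) ≤ δ := le_trans (norm_nonneg _) (hpt 1)
  -- the key smallness bound
  have hsmall : δ * M < 1 := by
    have h1 : δ * (M + 1) < (1 / (M + 1)) * (M + 1) := by
      apply mul_lt_mul_of_pos_right hsup (by positivity)
    rw [one_div_mul_cancel (by positivity : M + 1 ≠ 0)] at h1
    nlinarith
  -- Haar measure on G
  set μ : Measure G := Measure.haarMeasure (⊤ : PositiveCompacts G) with hμ
  haveI : IsProbabilityMeasure μ := ⟨by
    rw [← PositiveCompacts.coe_top (α := G)]; exact Measure.haarMeasure_self⟩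
  haveI : μ.IsMulLeftInvariant := Measure.isMulLeftInvariant_haarMeasure _
  -- the function to average
  set F : G → (E →L[ℂ] E) := fun g => (ρ' g : (E →L[ℂ] E)) * (ρ g⁻¹ : (E →L[ℂ] E)) with hF
  have hFcont : Continuous F := hρ'.mul hρinv
  have hcancel : ∀ g : G, (ρ g : (E →L[ℂ] E)) * (ρ g⁻¹ : (E →L[ℂ] E)) = 1 := by
    intro g
    rw [← Units.val_mul, ← map_mul, mul_inv_cancel, map_one, Units.val_one]
  have hcancel' : ∀ g : G, (ρ g⁻¹ : (E →L[ℂ] E)) * (ρ g : (E →L[ℂ] E)) = 1 := by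
    intro g
    rw [← Units.val_mul, ← map_mul, inv_mul_cancel, map_one, Units.val_one]
  have hFbound : ∀ g : G, ‖F g - 1‖ ≤ δ * M := by
    intro g
    have : F g - 1 = ((ρ' g : (E →L[ℂ] E)) - (ρ g : (E →L[ℂ] E))) * (ρ g⁻¹ : (E →L[ℂ] E)) := by
      rw [sub_mul, hcancel g, hF]
    rw [this]
    exact le_trans (norm_mul_le _ _)
      (mul_le_mul (hpt g) (hM g) (norm_nonneg _) hδ0)
  -- integrability
  have hFsm : StronglyMeasurable F :=
    stronglyMeasurable_iff_measurable_separable.2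
      ⟨hFcont.measurable, (isCompact_range hFcont).isSeparable⟩
  have hFi : Integrable F μ := by
    refine ⟨hFsm.aestronglyMeasurable, HasFiniteIntegral.of_bounded
      (C := δ * M + ‖(1 : (E →L[ℂ] E))‖) (Filter.Eventually.of_forall fun g => ?_)⟩
    calc ‖F g‖ = ‖(F g - 1) + 1‖ := by rw [sub_add_cancel]
      _ ≤ ‖F g - 1‖ + ‖(1 : (E →L[ℂ] E))‖ := norm_add_le _ _
      _ ≤ δ * M + ‖(1 : (E →L[ℂ] E))‖ := by linarith [hFbound g]
  -- the averaged operator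
  set V₀ : (E →L[ℂ] E) := ∫ g, F g ∂μ with hV₀
  -- `V₀` is close to `1`
  have hVnorm : ‖V₀ - 1‖ ≤ δ * M := by
    have hconst : (∫ _ : G, (1 : (E →L[ℂ] E)) ∂μ) = 1 := by
      simp [measure_univ]
    have : V₀ - 1 = ∫ g, (F g - 1) ∂μ := by
      rw [integral_sub hFi (integrable_const _), hconst]
    rw [this]
    calc ‖∫ g, (F g - 1) ∂μ‖ ≤ (δ * M) * (μ Set.univ).toReal :=
          norm_integral_le_of_norm_le_const (Filter.Eventually.of_forall hFbound)
      _ = δ * M := by simp [measure_univ]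
  have hlt : ‖(1 : (E →L[ℂ] E)) - V₀‖ < 1 := by
    rw [norm_sub_rev]; exact lt_of_le_of_lt hVnorm hsmall
  set V : (E →L[ℂ] E)ˣ := Units.oneSub ((1 : (E →L[ℂ] E)) - V₀) hlt with hV
  have hVval : (V : (E →L[ℂ] E)) = V₀ := by
    rw [hV, Units.val_oneSub, sub_sub_cancel]
  -- intertwining relation
  have hint : ∀ h : G, (ρ' h : (E →L[ℂ] E)) * V₀ = V₀ * (ρ h : (E →L[ℂ] E)) := by
    intro h
    have key : ∀ g : G, (ρ' h : (E →L[ℂ] E)) * F g = F (h * g) * (ρ h : (E →L[ℂ] E)) := by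
      intro g
      have : F (h * g) = (ρ' h : (E →L[ℂ] E)) * (ρ' g : (E →L[ℂ] E)) * ((ρ g⁻¹ : (E →L[ℂ] E)) * (ρ h⁻¹ : (E →L[ℂ] E))) := by
        rw [hF]
        simp only [map_mul, mul_inv_rev, Units.val_mul, mul_assoc]
      rw [this, hF]
      simp only [mul_assoc]
      rw [hcancel' h, mul_one]
    -- left multiplication by `ρ' h` commutes with the integral
    have hL : (ρ' h : (E →L[ℂ] E)) * V₀ = ∫ g, (ρ' h : (E →L[ℂ] E)) * F g ∂μ := by
      have := (ContinuousLinearMap.mul ℂ (E →L[ℂ] E) (ρ' h : (E →L[ℂ] E))).integral_comp_comm hFi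
      simpa using this.symm
    -- right multiplication by `ρ h` commutes with the integral
    have hshift : Integrable (fun g => F (h * g)) μ := hFi.comp_mul_left h
    have hR : (∫ g, F (h * g) ∂μ) * (ρ h : (E →L[ℂ] E)) = ∫ g, F (h * g) * (ρ h : (E →L[ℂ] E)) ∂μ := by
      have := ((ContinuousLinearMap.mul ℂ (E →L[ℂ] E)).flip (ρ h : (E →L[ℂ] E))).integral_comp_comm hshift
      simpa using this.symm
    rw [hL]
    simp_rw [key]
    rw [← hR, integral_mul_left_eq_self F h]
  refine ⟨V, fun g => ?_⟩
  have h1 : (V : E →L[ℂ] E) * (ρ g : E →L[ℂ] E) = (ρ' g : E →L[ℂ] E) * (V : E →L[ℂ] E) := by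
    rw [hVval]; exact (hint g).symm
  calc (ρ' g : E →L[ℂ] E)
      = (ρ' g : E →L[ℂ] E) * ((V : E →L[ℂ] E) * ((V⁻¹ : (E →L[ℂ] E)ˣ) : E →L[ℂ] E)) := by
        rw [Units.mul_inv, mul_one]
    _ = (V : E →L[ℂ] E) * (ρ g : E →L[ℂ] E) * ((V⁻¹ : (E →L[ℂ] E)ˣ) : E →L[ℂ] E) := by
        rw [← mul_assoc, ← h1]
end

section
/- Local analytic splitting for Banach-space representations: let G be a compact topological group, E a complex Banach space, and ρ a norm-continuous representation of G on E. Then there exist ε > 0 and a map V defined on the set S of all norm-continuous representations ρ' of G on E with sup_{g ∈ G} ‖ρ'(g) − ρ(g)‖ < ε (viewed as a subset of the Banach space C(G, L(E))), taking values in the bounded operators on E, such that: V(ρ) = 1; each V(ρ') is invertible; V(ρ') ρ'(g) V(ρ')⁻¹ = ρ(g) for all g ∈ G and ρ' ∈ S; and V is analytic on S as a map between subsets of the real Banach spaces C(G, L(E)) and L(E). -/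
open MeasureTheory Topology

set_option synthInstance.maxHeartbeats 1000000
set_option maxHeartbeats 2000000

/-- A continuous map `f : C(G, E →L[ℂ] E)` "is a norm-continuous representation of `G`
on the Banach space `E`": it is valued in invertible operators, unital and
multiplicative. -/
def IsBanachRep {G : Type*} [Group G] [TopologicalSpace G]
    {E : Type*} [NormedAddCommGroup E] [NormedSpace ℂ E]
    (f : C(G, E →L[ℂ] E)) : Prop :=
  (∀ g : G, IsUnit (f g)) ∧ f 1 = 1 ∧ ∀ g h : G, f (g * h) = f g * f h

/-- **Local analytic splitting for Banach-space representations.**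
Given a norm-continuous representation `ρ` of a compact group `G` on a complex Banach
space `E`, there are `ε > 0` and a map `V` from `C(G, E →L[ℂ] E)` to the bounded
operators on `E` which, on the set `S` of norm-continuous representations `ρ'` with
`⨆ g, ‖ρ' g − ρ g‖ < ε`, satisfies: `V ρ = 1`, each `V ρ'` is invertible with inverse
`W ρ'`, `V ρ' * ρ' g * W ρ' = ρ g` for all `g`, and `V` is real-analytic on `S`. -/
theorem local_analytic_splitting_rep_banach
    {G : Type*} [Group G] [TopologicalSpace G] [IsTopologicalGroup G] [CompactSpace G]
    {E : Type*} [NormedAddCommGroup E] [NormedSpace ℂ E] [CompleteSpace E]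
    (ρ : C(G, E →L[ℂ] E)) (hρ : IsBanachRep ρ) :
    ∃ ε > (0 : ℝ), ∃ V : C(G, E →L[ℂ] E) → (E →L[ℂ] E),
      V ρ = 1 ∧
      (∀ ρ' ∈ {f : C(G, E →L[ℂ] E) | IsBanachRep f ∧ (⨆ g : G, ‖f g - ρ g‖) < ε},
        ∃ W : E →L[ℂ] E, V ρ' * W = 1 ∧ W * V ρ' = 1 ∧
          ∀ g : G, V ρ' * ρ' g * W = ρ g) ∧
      AnalyticOn ℝ V
        {f : C(G, E →L[ℂ] E) | IsBanachRep f ∧ (⨆ g : G, ‖f g - ρ g‖) < ε} := by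
  classical
  borelize G
  haveI : Nonempty G := ⟨1⟩
  set A := E →L[ℂ] E with hA
  -- Haar probability measure on `G`
  let μ : Measure G := Measure.haarMeasure (⊤ : TopologicalSpace.PositiveCompacts G)
  haveI : IsProbabilityMeasure μ := by
    constructor
    have h := Measure.haarMeasure_self (K₀ := (⊤ : TopologicalSpace.PositiveCompacts G))
    simpa using h
  -- integrability of continuous functions
  have hint : ∀ φ : G → A, Continuous φ → Integrable φ μ := by
    intro φ hφ
    borelize A
    have sm : StronglyMeasurable φ :=
      hφ.stronglyMeasurable_of_support_subset_isCompact isCompact_univ (Set.subset_univ _)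
    obtain ⟨C, hC⟩ : ∃ C, ∀ x ∈ Set.univ, ‖φ x‖ ≤ C :=
      isCompact_univ.exists_bound_of_continuousOn hφ.continuousOn
    exact ⟨sm.aestronglyMeasurable,
      HasFiniteIntegral.of_bounded (ae_of_all _ fun x => hC x trivial)⟩
  have cont : ∀ f : C(G, A), Continuous fun g : G => ρ g * f g⁻¹ := fun f =>
    (map_continuous ρ).mul ((map_continuous f).comp continuous_inv)
  -- the averaging operator as a real-linear map
  let L : C(G, A) →ₗ[ℝ] A :=
    { toFun := fun f => ∫ g, ρ g * f g⁻¹ ∂μ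
      map_add' := fun f f' => by
        simp only [ContinuousMap.add_apply, mul_add]
        exact integral_add (hint _ (cont f)) (hint _ (cont f'))
      map_smul' := fun c f => by
        simp only [ContinuousMap.smul_apply, mul_smul_comm, RingHom.id_apply]
        exact integral_smul c _ }
  have hbound : ∀ f : C(G, A), ‖L f‖ ≤ ‖ρ‖ * ‖f‖ := by
    intro f
    have h1 : ‖∫ g, ρ g * f g⁻¹ ∂μ‖ ≤ (‖ρ‖ * ‖f‖) * (μ Set.univ).toReal :=
      norm_integral_le_of_norm_le_const (ae_of_all _ fun g =>
        (norm_mul_le _ _).trans (mul_le_mul (ContinuousMap.norm_coe_le_norm ρ g)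
          (ContinuousMap.norm_coe_le_norm f g⁻¹) (norm_nonneg _) (norm_nonneg ρ)))
    exact (by simpa [measure_univ] using h1 : ‖∫ g, ρ g * f g⁻¹ ∂μ‖ ≤ ‖ρ‖ * ‖f‖)
  have hcont : Continuous L := AddMonoidHomClass.continuous_of_bound L ‖ρ‖ hbound
  let Lc : C(G, A) →L[ℝ] A := ⟨L, hcont⟩
  have Lc_apply : ∀ f : C(G, A), Lc f = ∫ g, ρ g * f g⁻¹ ∂μ := fun f => rfl
  -- value at ρ
  have Vρ : Lc ρ = 1 := by
    rw [Lc_apply]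
    have h2 : (fun g : G => ρ g * ρ g⁻¹) = fun _ : G => (1 : A) := funext fun g => by
      rw [← hρ.2.2, mul_inv_cancel, hρ.2.1]
    rw [h2, integral_const]
    simp [measure_univ]
  -- the intertwining identity
  have key : ∀ f : C(G, A), IsBanachRep f → ∀ h : G, Lc f * f h = ρ h * Lc f := by
    intro f hf h
    have e1 : Lc f * f h = ∫ g, ρ g * f g⁻¹ * f h ∂μ := by
      rw [Lc_apply]
      exact (((ContinuousLinearMap.mul ℝ A).flip (f h)).integral_comp_comm
        (hint _ (cont f))).symm
    have e2 : (fun g : G => ρ g * f g⁻¹ * f h) = fun g : G => ρ g * f (g⁻¹ * h) :=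
      funext fun g => by rw [mul_assoc, ← hf.2.2]
    have e3 : ∫ g, ρ g * f (g⁻¹ * h) ∂μ = ∫ g, ρ (h * g) * f ((h * g)⁻¹ * h) ∂μ :=
      (integral_mul_left_eq_self (fun g : G => ρ g * f (g⁻¹ * h)) h).symm
    have e4 : (fun g : G => ρ (h * g) * f ((h * g)⁻¹ * h))
        = fun g : G => ρ h * (ρ g * f g⁻¹) := funext fun g => by
      rw [hρ.2.2, mul_inv_rev, mul_assoc g⁻¹, inv_mul_cancel, mul_one, mul_assoc]
    have e5 : ∫ g, ρ h * (ρ g * f g⁻¹) ∂μ = ρ h * Lc f := by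
      rw [Lc_apply]
      exact (ContinuousLinearMap.mul ℝ A (ρ h)).integral_comp_comm (hint _ (cont f))
    rw [e1, e2, e3, e4, e5]
  -- choose ε
  set ε : ℝ := (‖ρ‖ + 1)⁻¹ with hε
  have hεpos : 0 < ε := by positivity
  have hsup : ∀ f : C(G, A), (⨆ g : G, ‖f g - ρ g‖) = ‖f - ρ‖ := by
    intro f
    rw [ContinuousMap.norm_eq_iSup_norm]
    simp only [ContinuousMap.sub_apply]
  refine ⟨ε, hεpos, ⇑Lc, Vρ, ?_, ?_⟩
  swap
  · exact ContinuousLinearMap.analyticOn (𝕜 := ℝ) (E := C(G, A)) (F := A) Lc _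
  rintro ρ' ⟨hrep, hclose⟩
  rw [hsup ρ'] at hclose
  -- invertibility of Lc ρ'
  have hnorm : ‖(1 : A) - Lc ρ'‖ < 1 := by
    have h3 : ‖Lc ρ' - 1‖ ≤ ‖ρ‖ * ‖ρ' - ρ‖ := by
      rw [← Vρ, ← map_sub]
      exact hbound _
    have h4 : ‖ρ‖ * ‖ρ' - ρ‖ ≤ ‖ρ‖ * ε :=
      mul_le_mul_of_nonneg_left hclose.le (by exact norm_nonneg ρ)
    have h5 : ‖ρ‖ * ε < 1 := by
      rw [hε, ← div_eq_mul_inv, div_lt_one (by positivity)]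
      linarith
    rw [norm_sub_rev]
    exact lt_of_le_of_lt (h3.trans h4) h5
  let u : Aˣ := Units.oneSub _ hnorm
  have hu : (u : A) = Lc ρ' := by
    simp only [u, Units.val_oneSub, sub_sub_cancel]
  refine ⟨↑u⁻¹, ?_, ?_, ?_⟩
  · rw [← hu]; exact u.mul_inv
  · rw [← hu]; exact u.inv_mul
  · intro g
    rw [key ρ' hrep g, mul_assoc, ← hu, u.mul_inv, mul_one]
end

section
/- The set of norm-continuous representations of a compact group on a Banach space is locally an analytic retract of the ambient Banach space (the key content of its being a real-analytic Banach submanifold): let G be a compact topological group, E a complex Banach space, and R ⊆ C(G, L(E)) the set of norm-continuous representations of G on E. Then for every ρ ∈ R there exist an open neighborhood 𝒰 of ρ in C(G, L(E)) and a map r : 𝒰 → C(G, L(E)), analytic on 𝒰 as a map between real Banach spaces, such that r(f) ∈ R for every f ∈ 𝒰 and r(f) = f for every f ∈ R ∩ 𝒰. -/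
set_option synthInstance.maxHeartbeats 1000000
set_option maxHeartbeats 4000000
open MeasureTheory TopologicalSpace

/-- **Norm-continuous Banach-space representations form a locally analytically
retractible subset** of `C(G, L(E))` (the key content of being a real-analytic Banach
submanifold): every norm-continuous representation `ρ` of the compact group `G` on the
complex Banach space `E` has an open neighborhood `𝒰` in `C(G, E →L[ℂ] E)` carrying a
real-analytic map `r : 𝒰 → C(G, E →L[ℂ] E)` taking values in the set `R` of
norm-continuous representations and restricting to the identity on `R ∩ 𝒰`. -/
theorem rep_banach_locally_analytic_retract
    {G : Type*} [Group G] [TopologicalSpace G] [IsTopologicalGroup G] [CompactSpace G]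
    {E : Type*} [NormedAddCommGroup E] [NormedSpace ℂ E] [CompleteSpace E]
    (ρ : C(G, E →L[ℂ] E)) (hρ : IsBanachRep ρ) :
    ∃ 𝒰 : Set C(G, E →L[ℂ] E), IsOpen 𝒰 ∧ ρ ∈ 𝒰 ∧
      ∃ r : C(G, E →L[ℂ] E) → C(G, E →L[ℂ] E),
        AnalyticOn ℝ r 𝒰 ∧
        (∀ f ∈ 𝒰, IsBanachRep (r f)) ∧
        (∀ f ∈ {f : C(G, E →L[ℂ] E) | IsBanachRep f} ∩ 𝒰, r f = f) := by
  classical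
  borelize G
  set A := E →L[ℂ] E with hA
  -- normalized Haar measure on `G`
  let K₀ : PositiveCompacts G := ⟨⟨Set.univ, isCompact_univ⟩, by simp⟩
  let μ : Measure G := Measure.haarMeasure K₀
  haveI : IsProbabilityMeasure μ := ⟨by
    exact Measure.haarMeasure_self (K₀ := K₀)⟩
  -- integrability of continuous maps
  have hint : ∀ f : C(G, A), Integrable (⇑f) μ := fun f =>
    f.continuous.integrable_of_hasCompactSupport
      (IsCompact.of_isClosed_subset isCompact_univ (isClosed_tsupport _) (Set.subset_univ _))
  -- the averaging operator
  let I : C(G, A) →ₗ[ℝ] A :=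
    { toFun := fun f => ∫ g, f g ∂μ
      map_add' := fun f h => by
        simp only [ContinuousMap.coe_add] at *
        rw [← integral_add (hint f) (hint h)]
        simp
      map_smul' := fun c f => by
        simp only [ContinuousMap.coe_smul, RingHom.id_apply] at *
        rw [← integral_smul]
        simp }
  let IL : C(G, A) →L[ℝ] A := I.mkContinuous 1 (fun f : C(G, A) => by
    rw [one_mul]
    calc ‖∫ g, f g ∂μ‖ ≤ ‖f‖ * (μ Set.univ).toReal :=
          norm_integral_le_of_norm_le_const
            (Filter.Eventually.of_forall fun g => f.norm_coe_le_norm g)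
      _ = ‖f‖ := by simp)
  let σ : C(G, A) := ρ.comp ⟨fun g => g⁻¹, continuous_inv⟩
  let M : C(G, A) →L[ℝ] C(G, A) := (ContinuousLinearMap.mul ℝ C(G, A)).flip σ
  let T : C(G, A) →L[ℝ] A := IL.comp M
  have hT : ∀ f : C(G, A), T f = ∫ g, f g * ρ g⁻¹ ∂μ := fun f => rfl
  have hMσ : ∀ f : C(G, A), ⇑(f * σ) = fun g => f g * ρ g⁻¹ := fun f => rfl
  -- T ρ = 1
  have hTρ : T ρ = 1 := by
    rw [hT]
    have he : ∀ g : G, ρ g * ρ g⁻¹ = (1 : A) := fun g => by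
      rw [← hρ.2.2, mul_inv_cancel, hρ.2.1]
    simp only [he]
    simp
  -- intertwining identity for representations
  have hTint : ∀ f : C(G, A), IsBanachRep f → ∀ h : G, T f * ρ h = f h * T f := by
    intro f hf h
    rw [hT]
    have h1 : (∫ g, f g * ρ g⁻¹ ∂μ) * ρ h = ∫ g, f g * ρ g⁻¹ * ρ h ∂μ := by
      have := ContinuousLinearMap.integral_comp_comm
        ((ContinuousLinearMap.mul ℝ A).flip (ρ h)) (hint (f * σ))
      rw [hMσ] at this
      simpa using this.symm
    have h3 : ∫ g, f h * (f g * ρ g⁻¹) ∂μ = f h * ∫ g, f g * ρ g⁻¹ ∂μ := by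
      have := ContinuousLinearMap.integral_comp_comm
        (ContinuousLinearMap.mul ℝ A (f h)) (hint (f * σ))
      rw [hMσ] at this
      simpa using this
    have h2 : ∫ g, f g * ρ g⁻¹ * ρ h ∂μ = ∫ g, f h * (f g * ρ g⁻¹) ∂μ := by
      rw [← integral_mul_left_eq_self (μ := μ) (fun g => f g * ρ g⁻¹ * ρ h) h]
      refine integral_congr_ae (Filter.Eventually.of_forall fun k => ?_)
      have e1 : ρ (k⁻¹ * h⁻¹) * ρ h = ρ k⁻¹ := by
        rw [← hρ.2.2]
        congr 1
        group
      calc f (h * k) * ρ (h * k)⁻¹ * ρ h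
          = f h * f k * (ρ (k⁻¹ * h⁻¹) * ρ h) := by
            rw [hf.2.2, mul_inv_rev, mul_assoc]
        _ = f h * (f k * ρ k⁻¹) := by rw [e1, mul_assoc]
    rw [h1, h2, h3]
  -- the neighborhood
  refine ⟨T ⁻¹' Metric.ball (1 : A) 1, (Metric.isOpen_ball).preimage T.continuous, ?_, ?_⟩
  · show T ρ ∈ Metric.ball (1 : A) 1
    rw [hTρ]
    exact Metric.mem_ball_self one_pos
  -- units
  have hunit : ∀ f ∈ T ⁻¹' Metric.ball (1 : A) 1, IsUnit (T f) := by
    intro f hf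
    have hb : ‖(1 : A) - T f‖ < 1 := by
      rw [norm_sub_rev]
      have hf' := hf
      rw [Set.mem_preimage, Metric.mem_ball, dist_eq_norm] at hf'
      exact hf'
    exact ⟨Units.oneSub ((1 : A) - T f) hb, by simp [Units.oneSub]⟩
  -- the constant-map embedding
  let constLM : A →ₗ[ℝ] C(G, A) :=
    { toFun := fun a => ContinuousMap.const G a
      map_add' := fun a b => by ext g; simp
      map_smul' := fun c a => by ext g; simp }
  have hconstLM : ∀ a : A, constLM a = ContinuousMap.const G a := fun a => rfl
  have hbound : ∀ a : A, ‖constLM a‖ ≤ 1 * ‖a‖ := fun a => by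
    rw [one_mul]
    show ‖ContinuousMap.const G a‖ ≤ ‖a‖
    exact (ContinuousMap.norm_le _ (norm_nonneg a)).mpr fun g => le_rfl
  let constL : A →L[ℝ] C(G, A) := ⟨constLM, AddMonoidHomClass.continuous_of_bound constLM 1 hbound⟩
  have hconstL : ∀ a : A, constL a = ContinuousMap.const G a := fun a => rfl
  let r : C(G, A) → C(G, A) := fun f => constL (T f) * ρ * constL (Ring.inverse (T f))
  have hrval : ∀ (f : C(G, A)) (g : G), r f g = T f * ρ g * Ring.inverse (T f) :=
    fun f g => by
      simp only [r, ContinuousMap.mul_apply, hconstL, ContinuousMap.const_apply]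
  refine ⟨r, ?_, ?_, ?_⟩
  · -- analyticity
    refine AnalyticOnNhd.analyticOn ?_
    intro f hf
    have hTan : AnalyticAt ℝ (⇑T) f := ContinuousLinearMap.analyticAt (𝕜 := ℝ) (E := C(G, A)) (F := A) T f
    have hA1 : AnalyticAt ℝ (fun f : C(G, A) => (constL (T f) : C(G, A))) f := by
      exact ContinuousLinearMap.analyticAt (𝕜 := ℝ) (E := C(G, A)) (F := C(G, A))
        (constL.comp T) f
    have h1 : AnalyticAt ℝ (Ring.inverse : A → A) (T f) := by
      have h2 := analyticAt_inverse (𝕜 := ℝ) (A := A) (hunit f hf).unit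
      rwa [IsUnit.unit_spec] at h2
    have hinv : AnalyticAt ℝ (fun f : C(G, A) => Ring.inverse (T f)) f := by
      exact h1.comp hTan
    have hA2 : AnalyticAt ℝ (fun f : C(G, A) => (constL (Ring.inverse (T f)) : C(G, A))) f := by
      have hc : AnalyticAt ℝ (⇑constL) (Ring.inverse (T f)) :=
        ContinuousLinearMap.analyticAt (𝕜 := ℝ) (E := A) (F := C(G, A)) constL _
      exact AnalyticAt.comp (g := ⇑constL) (f := fun f : C(G, A) => Ring.inverse (T f))
        hc hinv
    have hρc : AnalyticAt ℝ (fun _ : C(G, A) => ρ) f := analyticAt_const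
    have hmul1 : AnalyticAt ℝ (fun f : C(G, A) => constL (T f) * ρ) f := by
      exact AnalyticAt.mul (𝕜 := ℝ) (E := C(G, A)) (A := C(G, A)) hA1 hρc
    exact AnalyticAt.mul (𝕜 := ℝ) (E := C(G, A)) (A := C(G, A)) hmul1 hA2
  · -- values are representations
    intro f hf
    obtain ⟨u, hu⟩ := hunit f hf
    have hi : Ring.inverse (T f) = ((u⁻¹ : Aˣ) : A) := by rw [← hu, Ring.inverse_unit]
    refine ⟨fun g => ?_, ?_, fun g h => ?_⟩
    · rw [hrval, hi, ← hu]
      exact (u.isUnit.mul (hρ.1 g)).mul u⁻¹.isUnit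
    · rw [hrval, hi, ← hu, hρ.2.1, mul_one, u.mul_inv]
    · rw [hrval, hrval, hrval, hi, ← hu, hρ.2.2]
      simp only [mul_assoc]
      congr 2
      rw [← mul_assoc ((u⁻¹ : Aˣ) : A), u.inv_mul, one_mul]
  · -- retraction
    rintro f ⟨hfrep, hfU⟩
    obtain ⟨u, hu⟩ := hunit f hfU
    have hi : Ring.inverse (T f) = ((u⁻¹ : Aˣ) : A) := by rw [← hu, Ring.inverse_unit]
    ext g
    rw [hrval, hi, hTint f hfrep g, mul_assoc, ← hu, u.mul_inv, mul_one]
end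

section
/- Stability of vanishing of spectral projections (classical content of the paper's Lemma on continuity of the spectrum map): let G be a compact topological group with Haar probability measure μ, A a unital C*-algebra, and χ : G → 𝕋 a continuous character. If U and U' are norm-continuous representations of G in A with sup_{g ∈ G} ‖U(g) − U'(g)‖ < 1, then P_χ(U) = 0 if and only if P_χ(U') = 0. -/
open MeasureTheory

private theorem cont_int' {X : Type*} [MeasurableSpace X] [TopologicalSpace X]
    [OpensMeasurableSpace X] [CompactSpace X]
    (μ : Measure X) [IsFiniteMeasure μ] {E : Type*} [NormedAddCommGroup E] (f : X → E)
    (hf : Continuous f) : Integrable f μ := by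
  borelize E
  have hsm : StronglyMeasurable f := stronglyMeasurable_iff_measurable_separable.2
    ⟨hf.measurable, (isCompact_range hf).isSeparable⟩
  obtain ⟨C, hC⟩ := (isCompact_range hf).isBounded.exists_norm_le
  exact (integrable_const C).mono' hsm.aestronglyMeasurable
    (Filter.Eventually.of_forall fun x => by simpa using hC _ ⟨x, rfl⟩)

/-- key: the spectral projection `P` of a norm-continuous unitary representation
satisfies `‖P‖ * ‖P‖ = ‖P‖`. -/
private theorem key_norm
    {G : Type*} [Group G] [TopologicalSpace G] [IsTopologicalGroup G] [CompactSpace G]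
    [MeasurableSpace G] [BorelSpace G]
    (μ : Measure G) [μ.IsHaarMeasure] [IsProbabilityMeasure μ]
    {A : Type*} [NormedRing A] [StarRing A] [CStarRing A] [NormedAlgebra ℂ A]
    [CompleteSpace A] [StarModule ℂ A]
    (χ : ContinuousMonoidHom G Circle) (V : G →* unitary A)
    (hV : Continuous fun g : G => (V g : A)) :
    ‖∫ g, (((χ g)⁻¹ : Circle) : ℂ) • (V g : A) ∂μ‖ *
      ‖∫ g, (((χ g)⁻¹ : Circle) : ℂ) • (V g : A) ∂μ‖ =
      ‖∫ g, (((χ g)⁻¹ : Circle) : ℂ) • (V g : A) ∂μ‖ := by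
  set f : G → A := fun g => (((χ g)⁻¹ : Circle) : ℂ) • (V g : A) with hf_def
  have hχc : Continuous fun g : G => (((χ g)⁻¹ : Circle) : ℂ) :=
    continuous_subtype_val.comp (χ.continuous.inv)
  have hfc : Continuous f := hχc.smul hV
  have hfi : Integrable f μ := cont_int' μ f hfc
  set P : A := ∫ g, f g ∂μ with hP_def
  -- eigen relation : V h * P = χ h • P
  have eig : ∀ h : G, (V h : A) * P = ((χ h : Circle) : ℂ) • P := by
    intro h
    have h1 : (V h : A) * P = ∫ g, (V h : A) * f g ∂μ :=
      ((ContinuousLinearMap.mul ℂ A (V h : A)).integral_comp_comm hfi).symm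
    rw [h1]
    have h2 : ∀ g : G, (V h : A) * f g = (((χ (h⁻¹ * (h * g)))⁻¹ : Circle) : ℂ) • (V (h * g) : A) := by
      intro g
      simp [f, mul_smul_comm, ← Submonoid.coe_mul, ← map_mul]
    simp_rw [h2]
    rw [integral_mul_left_eq_self (fun g => (((χ (h⁻¹ * g))⁻¹ : Circle) : ℂ) • (V g : A)) h]
    have h3 : ∀ g : G, (((χ (h⁻¹ * g))⁻¹ : Circle) : ℂ) • (V g : A)
        = ((χ h : Circle) : ℂ) • f g := by
      intro g
      rw [hf_def]
      rw [smul_smul]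
      congr 1
      push_cast [map_mul, map_inv, mul_inv]
      rw [inv_inv]
    simp_rw [h3]
    rw [integral_smul]
  -- star P * P = P
  have hstar : star P * P = P := by
    have hsP : star P = ∫ g, star (f g) ∂μ := by
      have := (starL' ℝ : A ≃L[ℝ] A).integral_comp_comm (μ := μ) f
      simpa [starL'] using this.symm
    have h1 : star P * P = ∫ g, star (f g) * P ∂μ := by
      rw [hsP]
      exact (((ContinuousLinearMap.mul ℂ A).flip P).integral_comp_comm
        (cont_int' μ _ (continuous_star.comp hfc))).symm
    rw [h1]
    have h2 : ∀ g : G, star (f g) * P = P := by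
      intro g
      have hstarV : star (V g : A) = (V g⁻¹ : A) := by
        rw [← Unitary.coe_star, Unitary.star_eq_inv, ← map_inv]
      have hz : ∀ z : Circle, star ((z : ℂ)) * ((z : ℂ)) = 1 := by
        intro z
        rw [RCLike.star_def, ← Circle.coe_inv_eq_conj, ← Circle.coe_mul, inv_mul_cancel,
          Circle.coe_one]
      rw [hf_def]
      simp only [star_smul, smul_mul_assoc, hstarV, eig g⁻¹]
      rw [smul_smul, map_inv, hz, one_smul]
    simp_rw [h2]
    simp [measure_univ]
  calc ‖P‖ * ‖P‖ = ‖star P * P‖ := (CStarRing.norm_star_mul_self).symm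
    _ = ‖P‖ := by rw [hstar]

private theorem zero_of_norm_lt_one {A : Type*} [NormedRing A] {Q : A}
    (hidem : ‖Q‖ * ‖Q‖ = ‖Q‖) (hlt : ‖Q‖ < 1) : Q = 0 := by
  have h0 : ‖Q‖ = 0 ∨ ‖Q‖ = 1 := by
    by_cases hq : ‖Q‖ = 0
    · exact Or.inl hq
    · exact Or.inr (mul_left_cancel₀ hq (by rw [hidem, mul_one]))
  rcases h0 with h | h
  · exact norm_eq_zero.mp h
  · exact absurd h hlt.ne

/-- **Stability of vanishing of spectral projections** (classical content of the
paper's spectrum-continuity Lemma): if `U, U'` are norm-continuous representations of a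
compact group `G` in a unital C*-algebra `A` with `⨆ g, ‖U g − U' g‖ < 1`, then for any
continuous character `χ : G → 𝕋` the spectral projection `P_χ(U) = ∫ χ(g)⁻¹ • U g dμ`
vanishes if and only if `P_χ(U')` does, `μ` being the Haar probability measure. -/
theorem spectral_projection_vanishing_stable_cstar
    {G : Type*} [Group G] [TopologicalSpace G] [IsTopologicalGroup G] [CompactSpace G]
    [MeasurableSpace G] [BorelSpace G]
    (μ : Measure G) [μ.IsHaarMeasure] [IsProbabilityMeasure μ]
    {A : Type*} [NormedRing A] [StarRing A] [CStarRing A] [NormedAlgebra ℂ A]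
    [CompleteSpace A] [StarModule ℂ A]
    (χ : ContinuousMonoidHom G Circle)
    (U U' : G →* unitary A)
    (hU : Continuous fun g : G => (U g : A))
    (hU' : Continuous fun g : G => (U' g : A))
    (hclose : (⨆ g : G, ‖(U g : A) - (U' g : A)‖) < 1) :
    (∫ g, (((χ g)⁻¹ : Circle) : ℂ) • (U g : A) ∂μ) = 0 ↔
      (∫ g, (((χ g)⁻¹ : Circle) : ℂ) • (U' g : A) ∂μ) = 0 := by
  set P : A := ∫ g, (((χ g)⁻¹ : Circle) : ℂ) • (U g : A) ∂μ with hP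
  set P' : A := ∫ g, (((χ g)⁻¹ : Circle) : ℂ) • (U' g : A) ∂μ with hP'
  have hnP : ‖P‖ * ‖P‖ = ‖P‖ := key_norm μ χ U hU
  have hnP' : ‖P'‖ * ‖P'‖ = ‖P'‖ := key_norm μ χ U' hU'
  have hχc : Continuous fun g : G => (((χ g)⁻¹ : Circle) : ℂ) :=
    continuous_subtype_val.comp (χ.continuous.inv)
  have hfi : Integrable (fun g => (((χ g)⁻¹ : Circle) : ℂ) • (U g : A)) μ :=
    cont_int' μ _ (hχc.smul hU)
  have hfi' : Integrable (fun g => (((χ g)⁻¹ : Circle) : ℂ) • (U' g : A)) μ :=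
    cont_int' μ _ (hχc.smul hU')
  have hdiff : ‖P - P'‖ < 1 := by
    have hsub : P - P' = ∫ g, (((χ g)⁻¹ : Circle) : ℂ) • ((U g : A) - (U' g : A)) ∂μ := by
      rw [hP, hP', ← integral_sub hfi hfi']
      congr 1
      ext g
      rw [smul_sub]
    set C : ℝ := ⨆ g : G, ‖(U g : A) - (U' g : A)‖ with hC
    have hbdd : BddAbove (Set.range fun g : G => ‖(U g : A) - (U' g : A)‖) :=
      (isCompact_range (hU.sub hU').norm).bddAbove
    have hle : ‖P - P'‖ ≤ C * (μ Set.univ).toReal := by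
      rw [hsub]
      refine norm_integral_le_of_norm_le_const (Filter.Eventually.of_forall fun g => ?_)
      rw [norm_smul]
      have h1 : ‖(((χ g)⁻¹ : Circle) : ℂ)‖ = 1 := Circle.norm_coe _
      rw [h1, one_mul]
      exact le_ciSup hbdd g
    rw [measure_univ, ENNReal.toReal_one, mul_one] at hle
    exact lt_of_le_of_lt hle hclose
  constructor
  · intro h
    apply zero_of_norm_lt_one hnP'
    calc ‖P'‖ = ‖P - P'‖ := by rw [h, zero_sub, norm_neg]
      _ < 1 := hdiff
  · intro h
    apply zero_of_norm_lt_one hnP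
    calc ‖P‖ = ‖P - P'‖ := by rw [h, sub_zero]
      _ < 1 := hdiff
end

section
/- Stability of vanishing of spectral idempotents for Banach-space representations (classical content of the paper's Lemma on spectrum continuity in the Banach setting): let G be a compact topological group with Haar probability measure μ, E a complex Banach space, and χ : G → 𝕋 a continuous character. If ρ and ρ' are norm-continuous representations of G on E with sup_{g ∈ G} ‖ρ(g) − ρ'(g)‖ < 1, then P_χ(ρ) = 0 if and only if P_χ(ρ') = 0. -/
open MeasureTheory

section Aux

variable {G : Type*} [Group G] [TopologicalSpace G] [IsTopologicalGroup G] [CompactSpace G]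
    [MeasurableSpace G] [BorelSpace G]
    (μ : Measure G) [μ.IsHaarMeasure] [IsProbabilityMeasure μ]
    {E : Type*} [NormedAddCommGroup E] [NormedSpace ℂ E] [CompleteSpace E]

private lemma aux_cont (χ : ContinuousMonoidHom G Circle) (ρ : G →* (E →L[ℂ] E)ˣ)
    (hρ : Continuous fun g : G => (ρ g : E →L[ℂ] E)) :
    Continuous fun g : G => (((χ g)⁻¹ : Circle) : ℂ) • (ρ g : E →L[ℂ] E) := by
  refine Continuous.smul (f := fun g : G => (((χ g)⁻¹ : Circle) : ℂ)) ?_ hρ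
  have : (fun g : G => (((χ g)⁻¹ : Circle) : ℂ))
      = fun g : G => (starRingEnd ℂ) ((χ g : Circle) : ℂ) :=
    funext fun g => Circle.coe_inv_eq_conj _
  rw [this]
  exact Complex.continuous_conj.comp (continuous_subtype_val.comp χ.continuous)

private lemma aux_int (χ : ContinuousMonoidHom G Circle) (ρ : G →* (E →L[ℂ] E)ˣ)
    (hρ : Continuous fun g : G => (ρ g : E →L[ℂ] E)) :
    Integrable (fun g : G => (((χ g)⁻¹ : Circle) : ℂ) • (ρ g : E →L[ℂ] E)) μ :=
  (aux_cont χ ρ hρ).integrable_of_hasCompactSupport (HasCompactSupport.of_compactSpace _)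

/-- The spectral idempotent is an idempotent. -/
private lemma aux_idem (χ : ContinuousMonoidHom G Circle) (ρ : G →* (E →L[ℂ] E)ˣ)
    (hρ : Continuous fun g : G => (ρ g : E →L[ℂ] E)) :
    (∫ g, (((χ g)⁻¹ : Circle) : ℂ) • (ρ g : E →L[ℂ] E) ∂μ) *
      (∫ g, (((χ g)⁻¹ : Circle) : ℂ) • (ρ g : E →L[ℂ] E) ∂μ) =
      ∫ g, (((χ g)⁻¹ : Circle) : ℂ) • (ρ g : E →L[ℂ] E) ∂μ := by
  set f : G → (E →L[ℂ] E) := fun g => (((χ g)⁻¹ : Circle) : ℂ) • (ρ g : E →L[ℂ] E) with hf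
  have hint : Integrable f μ := aux_int μ χ ρ hρ
  set P : E →L[ℂ] E := ∫ g, f g ∂μ with hP
  have hunit : ∀ g : G, ((χ g : Circle) : ℂ) * (((χ g)⁻¹ : Circle) : ℂ) = 1 := by
    intro g
    rw [← Circle.coe_mul, mul_inv_cancel, Circle.coe_one]
  -- Step 1: ρ g * P = χ g • P
  have step1 : ∀ g : G, (ρ g : E →L[ℂ] E) * P = ((χ g : Circle) : ℂ) • P := by
    intro g
    have h1 : (ρ g : E →L[ℂ] E) * P = ∫ h, (ρ g : E →L[ℂ] E) * f h ∂μ :=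
      ((ContinuousLinearMap.mul ℂ (E →L[ℂ] E) ((ρ g : E →L[ℂ] E))).integral_comp_comm hint).symm
    rw [h1]
    have h2 : ∀ h : G, (ρ g : E →L[ℂ] E) * f h = ((χ g : Circle) : ℂ) • f (g * h) := by
      intro h
      simp only [hf, map_mul, mul_inv, Circle.coe_mul, Circle.coe_inv, Units.val_mul,
        smul_smul, mul_smul_comm]
      congr 1
      have ha : ((χ g : Circle) : ℂ) ≠ 0 := Circle.coe_ne_zero _
      have hb : ((χ h : Circle) : ℂ) ≠ 0 := Circle.coe_ne_zero _
      field_simp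
    simp_rw [h2]
    rw [integral_smul]
    congr 1
    exact integral_mul_left_eq_self f g
  -- Step 2
  have h3 : P * P = ∫ g, f g * P ∂μ :=
    (((ContinuousLinearMap.mul ℂ (E →L[ℂ] E)).flip P).integral_comp_comm hint).symm
  rw [h3]
  have h4 : ∀ g : G, f g * P = P := by
    intro g
    simp only [hf]
    rw [smul_mul_assoc, step1 g, smul_smul, mul_comm, hunit g, one_smul]
  simp_rw [h4]
  simp

/-- A nonzero idempotent has norm at least one. -/
private lemma aux_norm {A : Type*} [NormedRing A] {P : A} (hP : P * P = P) (h : P ≠ 0) :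
    1 ≤ ‖P‖ := by
  have h0 : 0 < ‖P‖ := norm_pos_iff.mpr h
  have := norm_mul_le P P
  rw [hP] at this
  nlinarith

end Aux

/-- **Stability of vanishing of spectral idempotents for Banach-space representations**
(classical content of the paper's spectrum-continuity Lemma in the Banach setting): if
`ρ, ρ'` are norm-continuous representations of a compact group `G` on a complex Banach
space `E` with `⨆ g, ‖ρ g − ρ' g‖ < 1`, then for any continuous character `χ : G → 𝕋`
the spectral idempotent `P_χ(ρ) = ∫ χ(g)⁻¹ • ρ g dμ` vanishes if and only if `P_χ(ρ')`
does, `μ` being the Haar probability measure. -/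
theorem spectral_idempotent_vanishing_stable_banach
    {G : Type*} [Group G] [TopologicalSpace G] [IsTopologicalGroup G] [CompactSpace G]
    [MeasurableSpace G] [BorelSpace G]
    (μ : Measure G) [μ.IsHaarMeasure] [IsProbabilityMeasure μ]
    {E : Type*} [NormedAddCommGroup E] [NormedSpace ℂ E] [CompleteSpace E]
    (χ : ContinuousMonoidHom G Circle)
    (ρ ρ' : G →* (E →L[ℂ] E)ˣ)
    (hρ : Continuous fun g : G => (ρ g : E →L[ℂ] E))
    (hρ' : Continuous fun g : G => (ρ' g : E →L[ℂ] E))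
    (hclose : (⨆ g : G, ‖(ρ g : E →L[ℂ] E) - (ρ' g : E →L[ℂ] E)‖) < 1) :
    (∫ g, (((χ g)⁻¹ : Circle) : ℂ) • (ρ g : E →L[ℂ] E) ∂μ) = 0 ↔
      (∫ g, (((χ g)⁻¹ : Circle) : ℂ) • (ρ' g : E →L[ℂ] E) ∂μ) = 0 := by
  set P : E →L[ℂ] E := ∫ g, (((χ g)⁻¹ : Circle) : ℂ) • (ρ g : E →L[ℂ] E) ∂μ with hPdef
  set Q : E →L[ℂ] E := ∫ g, (((χ g)⁻¹ : Circle) : ℂ) • (ρ' g : E →L[ℂ] E) ∂μ with hQdef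
  have hPidem := aux_idem μ χ ρ hρ
  have hQidem := aux_idem μ χ ρ' hρ'
  -- the difference has small norm
  have hdiff : ‖P - Q‖ < 1 := by
    have hint : Integrable (fun g : G => (((χ g)⁻¹ : Circle) : ℂ) • (ρ g : E →L[ℂ] E)
        - (((χ g)⁻¹ : Circle) : ℂ) • (ρ' g : E →L[ℂ] E)) μ :=
      (aux_int μ χ ρ hρ).sub (aux_int μ χ ρ' hρ')
    have hPQ : P - Q = ∫ g, ((((χ g)⁻¹ : Circle) : ℂ) • (ρ g : E →L[ℂ] E)
        - (((χ g)⁻¹ : Circle) : ℂ) • (ρ' g : E →L[ℂ] E)) ∂μ := by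
      rw [integral_sub (aux_int μ χ ρ hρ) (aux_int μ χ ρ' hρ')]
    rw [hPQ]
    set C : ℝ := ⨆ g : G, ‖(ρ g : E →L[ℂ] E) - (ρ' g : E →L[ℂ] E)‖ with hC
    have hbdd : BddAbove (Set.range fun g : G => ‖(ρ g : E →L[ℂ] E) - (ρ' g : E →L[ℂ] E)‖) :=
      (isCompact_range ((hρ.sub hρ').norm)).bddAbove
    have hnorm : ∀ g : G, ‖(((χ g)⁻¹ : Circle) : ℂ) • (ρ g : E →L[ℂ] E)
        - (((χ g)⁻¹ : Circle) : ℂ) • (ρ' g : E →L[ℂ] E)‖ ≤ C := by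
      intro g
      rw [← smul_sub, norm_smul]
      have : ‖(((χ g)⁻¹ : Circle) : ℂ)‖ = 1 := by
        rw [Circle.norm_coe]
      rw [this, one_mul]
      exact le_ciSup hbdd g
    calc ‖∫ g, ((((χ g)⁻¹ : Circle) : ℂ) • (ρ g : E →L[ℂ] E)
        - (((χ g)⁻¹ : Circle) : ℂ) • (ρ' g : E →L[ℂ] E)) ∂μ‖
        ≤ C * (μ Set.univ).toReal :=
          norm_integral_le_of_norm_le_const (Filter.Eventually.of_forall hnorm)
      _ = C := by simp
      _ < 1 := hclose
  constructor
  · intro hP0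
    by_contra hQ0
    have h1 : (1 : ℝ) ≤ ‖Q‖ := aux_norm hQidem hQ0
    have : ‖P - Q‖ = ‖Q‖ := by rw [hP0, zero_sub, norm_neg]
    linarith [this ▸ hdiff]
  · intro hQ0
    by_contra hP0
    have h1 : (1 : ℝ) ≤ ‖P‖ := aux_norm hPidem hP0
    have : ‖P - Q‖ = ‖P‖ := by rw [hQ0, sub_zero]
    linarith [this ▸ hdiff]
end

section
/- Finite spectral decomposition of norm-continuous representations of compact abelian groups in C*-algebras: let G be a compact abelian topological group, A a unital C*-algebra, and U a norm-continuous representation of G in A. Then there exist finitely many pairwise distinct continuous characters χ₁, …, χ_n : G → 𝕋 and nonzero projections (self-adjoint idempotents) p₁, …, p_n ∈ A with p_i p_j = 0 for i ≠ j and p₁ + ⋯ + p_n = 1, such that U(g) = χ₁(g) p₁ + ⋯ + χ_n(g) p_n for every g ∈ G. -/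
open Complex ComplexConjugate

lemma cos_le_half {t : ℝ} (h1 : Real.pi/3 ≤ t) (h2 : t ≤ 5*Real.pi/3) : Real.cos t ≤ 1/2 := by
  have hpi := Real.pi_pos
  rcases le_total t Real.pi with h | h
  · calc Real.cos t ≤ Real.cos (Real.pi/3) := by
          apply Real.cos_le_cos_of_nonneg_of_le_pi (by positivity) h h1
       _ = 1/2 := by rw [Real.cos_pi_div_three]
  · have : Real.cos t = Real.cos (2*Real.pi - t) := by
      rw [Real.cos_sub]; simp [Real.cos_two_pi, Real.sin_two_pi]
    rw [this]
    calc Real.cos (2*Real.pi - t) ≤ Real.cos (Real.pi/3) := by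
          apply Real.cos_le_cos_of_nonneg_of_le_pi (by positivity) (by linarith) (by linarith)
       _ = 1/2 := by rw [Real.cos_pi_div_three]

lemma exists_pow_re_le_half {z : ℂ} (hz : ‖z‖ = 1) (hz1 : z ≠ 1) :
    ∃ k : ℕ, (z ^ k).re ≤ 1/2 := by
  have hpi := Real.pi_pos
  suffices H : ∀ w : ℂ, ‖w‖ = 1 → 0 < w.arg → w.arg ≤ Real.pi →
      ∃ k : ℕ, (w ^ k).re ≤ 1/2 by
    rcases lt_trichotomy (arg z) 0 with h | h | h
    · have hne : arg z ≠ Real.pi := by linarith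
      have harg : (conj z).arg = - z.arg := by rw [Complex.arg_conj, if_neg hne]
      obtain ⟨k, hk⟩ := H (conj z) (by simpa using hz)
        (by rw [harg]; linarith)
        (by rw [harg]; linarith [Complex.neg_pi_lt_arg z])
      refine ⟨k, ?_⟩
      have : ((conj z) ^ k).re = (z ^ k).re := by
        rw [← map_pow]; exact Complex.conj_re _
      linarith [this ▸ hk]
    · exfalso
      have := Complex.norm_mul_exp_arg_mul_I z
      rw [h, hz] at this
      simp at this
      exact hz1 this.symm
    · exact H z hz h (Complex.arg_le_pi z)
  intro w hw h0 hpi'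
  set θ := w.arg with hθ
  have hwexp : w = Complex.exp (θ * Complex.I) := by
    have := Complex.norm_mul_exp_arg_mul_I w
    rw [hw] at this
    rw [← this]; norm_num; rfl
  set k := ⌈Real.pi / (3*θ)⌉₊ with hk
  have hk1 : Real.pi/(3*θ) ≤ k := Nat.le_ceil _
  have hk2 : (k:ℝ) < Real.pi/(3*θ) + 1 := Nat.ceil_lt_add_one (by positivity)
  refine ⟨k, ?_⟩
  have hre : (w ^ k).re = Real.cos (k * θ) := by
    rw [hwexp, ← Complex.exp_nat_mul]
    rw [show (k:ℂ) * (θ * Complex.I) = (((k:ℝ)*θ : ℝ):ℂ) * Complex.I by push_cast; ring]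
    rw [Complex.exp_ofReal_mul_I_re]
  rw [hre]
  have h3 : (0:ℝ) < 3*θ := by linarith
  rw [div_le_iff₀ h3] at hk1
  have h4 : (k:ℝ)*θ < Real.pi/3 + θ := by
    have h5 := mul_lt_mul_of_pos_right hk2 h0
    have heq : Real.pi/(3*θ)*θ = Real.pi/3 := by field_simp
    rw [add_mul, one_mul, heq] at h5
    exact h5
  apply cos_le_half
  · nlinarith
  · linarith

lemma one_le_abs_sub_one {w : ℂ} (hw : ‖w‖ = 1) (hre : w.re ≤ 1/2) :
    1 ≤ ‖w - 1‖ := by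
  have h1 : Complex.normSq w = 1 := by rw [Complex.normSq_eq_norm_sq, hw]; norm_num
  have h2 : Complex.normSq (w - 1) = 2 - 2*w.re := by
    simp [Complex.normSq_apply, Complex.sub_re, Complex.sub_im] at h1 ⊢
    nlinarith
  have h3 : (1:ℝ) ≤ Complex.normSq (w-1) := by rw [h2]; linarith
  have h4 := Complex.sq_norm (w-1)
  nlinarith [norm_nonneg (w-1)]

lemma exists_pow_sep {z w : ℂ} (hz : ‖z‖ = 1) (hw : ‖w‖ = 1)
    (hne : z ≠ w) : ∃ k : ℕ, 1 ≤ ‖z ^ k - w ^ k‖ := by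
  have hw0 : w ≠ 0 := by intro h; rw [h] at hw; simp at hw
  set v := z * w⁻¹ with hv
  have hva : ‖v‖ = 1 := by
    rw [hv, norm_mul, norm_inv, hz, hw]; norm_num
  have hv1 : v ≠ 1 := by
    rw [hv]; intro h
    apply hne
    field_simp at h
    exact h
  obtain ⟨k, hk⟩ := exists_pow_re_le_half hva hv1
  refine ⟨k, ?_⟩
  have key : z ^ k - w ^ k = w ^ k * (v ^ k - 1) := by
    rw [hv, mul_pow, inv_pow, mul_sub, mul_one, mul_comm (w ^ k), mul_assoc, inv_mul_cancel₀ (pow_ne_zero _ hw0), mul_one]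
  rw [key, norm_mul, norm_pow, hw, one_pow, one_mul]
  exact one_le_abs_sub_one (by rw [norm_pow, hva, one_pow]) hk

open Complex ComplexConjugate WeakDual
set_option linter.unusedSectionVars false

section Setup
variable {G : Type*} [CommGroup G] [TopologicalSpace G] [IsTopologicalGroup G] [CompactSpace G]
    {A : Type*} [NormedRing A] [StarRing A] [CStarRing A] [NormedAlgebra ℂ A]
    [CompleteSpace A] [StarModule ℂ A]
    (U : G →* unitary A)

def repSet : Set A := Set.range fun g : G => (U g : A)

lemma star_mem_repSet {a : A} (ha : a ∈ repSet U) : star a ∈ repSet U := by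
  obtain ⟨g, rfl⟩ := ha
  refine ⟨g⁻¹, ?_⟩
  show ((U g⁻¹ : unitary A) : A) = star ((U g : unitary A) : A)
  rw [map_inv, ← Unitary.star_eq_inv, Unitary.coe_star]

lemma repSet_comm {a b : A} (ha : a ∈ repSet U) (hb : b ∈ repSet U) : a * b = b * a := by
  obtain ⟨g, rfl⟩ := ha
  obtain ⟨h, rfl⟩ := hb
  calc (U g : A) * U h = ((U g * U h : unitary A) : A) := rfl
    _ = ((U h * U g : unitary A) : A) := by rw [← map_mul, ← map_mul, mul_comm]
    _ = (U h : A) * U g := rfl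

noncomputable def repAlg : StarSubalgebra ℂ A :=
  (StarAlgebra.adjoin ℂ (repSet U)).topologicalClosure

lemma repAlg_isClosed : IsClosed (repAlg U : Set A) :=
  isClosed_closure

noncomputable instance : CommRing (repAlg U) := by
  letI : CommRing (StarAlgebra.adjoin ℂ (repSet U)) :=
    StarAlgebra.adjoinCommRingOfComm ℂ
      (fun a ha b hb => repSet_comm U ha hb)
      (fun a ha b hb => repSet_comm U ha (star_mem_repSet U hb))
  exact fast_instance% StarSubalgebra.commRingTopologicalClosure _ fun x y => mul_comm x y

noncomputable instance : CommCStarAlgebra (repAlg U) :=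
  letI : IsClosed ((repAlg U : StarSubalgebra ℂ A) : Set A) := repAlg_isClosed U
  { toCompleteSpace := (repAlg_isClosed U).completeSpace_coe
    norm_mul_self_le := fun x => CStarRing.norm_star_mul_self (x := (x : A)) |>.symm.le
    mul_comm := mul_comm }

end Setup

section Setup2
set_option linter.unusedSectionVars false
variable {G : Type*} [CommGroup G] [TopologicalSpace G] [IsTopologicalGroup G] [CompactSpace G]
    {A : Type*} [NormedRing A] [StarRing A] [CStarRing A] [NormedAlgebra ℂ A]
    [CompleteSpace A] [StarModule ℂ A]
    (U : G →* unitary A)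

lemma mem_repAlg (g : G) : (U g : A) ∈ repAlg U :=
  StarSubalgebra.le_topologicalClosure _ (StarAlgebra.subset_adjoin ℂ _ ⟨g, rfl⟩)

noncomputable def uB : G →* repAlg U where
  toFun g := ⟨U g, mem_repAlg U g⟩
  map_one' := Subtype.ext <| by simp
  map_mul' g h := Subtype.ext <| by simp

lemma uB_mul_star (g : G) : uB U g * star (uB U g) = 1 :=
  Subtype.ext <| by
    show (U g : A) * star (U g : A) = 1
    exact Unitary.coe_mul_star_self (U g)

lemma abs_char (x : characterSpace ℂ (repAlg U)) (g : G) :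
    ‖x (uB U g)‖ = 1 := by
  have h1 : x (uB U g) * conj (x (uB U g)) = 1 := by
    rw [← RCLike.star_def, ← map_star, ← map_mul, uB_mul_star, map_one]
  have := Complex.mul_conj (x (uB U g))
  rw [this] at h1
  have h2 : Complex.normSq (x (uB U g)) = 1 := by exact_mod_cast h1
  rw [← Complex.sq_norm] at h2
  nlinarith [norm_nonneg (x (uB U g))]

end Setup2

section Setup3
set_option linter.unusedSectionVars false
variable {G : Type*} [CommGroup G] [TopologicalSpace G] [IsTopologicalGroup G] [CompactSpace G]
    {A : Type*} [NormedRing A] [StarRing A] [CStarRing A] [NormedAlgebra ℂ A]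
    [CompleteSpace A] [StarModule ℂ A]
    (U : G →* unitary A) (hU : Continuous fun g : G => (U g : A))

lemma continuous_uB (hU : Continuous fun g : G => (U g : A)) :
    Continuous fun g : G => uB U g :=
  Continuous.subtype_mk hU _

noncomputable def Phi (hU : Continuous fun g : G => (U g : A)) :
    characterSpace ℂ (repAlg U) → C(G, ℂ) :=
  fun x => ⟨fun g => x (uB U g), (map_continuous x).comp (continuous_uB U hU)⟩

instance nontrivial_repAlg [Nontrivial A] : Nontrivial (repAlg U) :=
  ⟨⟨1, 0, fun h => one_ne_zero (α := A) (congrArg Subtype.val h)⟩⟩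

lemma norm_char_apply_le [Nontrivial A] (x : characterSpace ℂ (repAlg U)) (b : repAlg U) :
    ‖x b‖ ≤ ‖b‖ :=
  spectrum.norm_le_norm_of_mem (WeakDual.CharacterSpace.apply_mem_spectrum x b)

lemma continuous_Phi [Nontrivial A] : Continuous (Phi U hU) := by
  refine continuous_iff_continuousAt.mpr fun x => ?_
  rw [ContinuousAt, Metric.tendsto_nhds]
  intro ε hε
  have hK : IsCompact (Set.range fun g : G => uB U g) :=
    isCompact_range (continuous_uB U hU)
  obtain ⟨t, ht⟩ := hK.elim_finite_subcover (fun b : repAlg U => Metric.ball b (ε/4))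
    (fun _ => Metric.isOpen_ball)
    (fun b hb => Set.mem_iUnion.2 ⟨b, Metric.mem_ball_self (by positivity)⟩)
  have hev : ∀ b : repAlg U, Continuous fun y : characterSpace ℂ (repAlg U) => y b :=
    fun b => (WeakDual.eval_continuous b).comp continuous_subtype_val
  have hmem : ∀ᶠ y in nhds x, ∀ b ∈ t, ‖y b - x b‖ < ε/4 := by
    rw [Filter.eventually_all_finset]
    intro b hb
    have hc : Continuous fun y : characterSpace ℂ (repAlg U) => ‖y b - x b‖ :=
      ((hev b).sub continuous_const).norm
    have ho : IsOpen {y : characterSpace ℂ (repAlg U) | ‖y b - x b‖ < ε/4} :=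
      isOpen_lt hc continuous_const
    exact ho.mem_nhds (by simp; positivity)
  refine hmem.mono fun y hy => ?_
  have hle : dist (Phi U hU y) (Phi U hU x) ≤ 3*(ε/4) := by
    rw [ContinuousMap.dist_le (by positivity)]
    intro g
    obtain ⟨b, hb⟩ : ∃ b ∈ t, uB U g ∈ Metric.ball b (ε/4) := by
      have := ht ⟨g, rfl⟩
      simpa using this
    obtain ⟨hbt, hbb⟩ := hb
    have h1 : ‖y (uB U g) - y b‖ ≤ ε/4 := by
      rw [← map_sub]
      refine (norm_char_apply_le U y _).trans ?_
      rw [← dist_eq_norm]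
      exact le_of_lt (Metric.mem_ball.mp hbb)
    have h2 : ‖y b - x b‖ ≤ ε/4 := le_of_lt (hy b hbt)
    have h3 : ‖x b - x (uB U g)‖ ≤ ε/4 := by
      rw [← map_sub]
      refine (norm_char_apply_le U x _).trans ?_
      rw [← dist_eq_norm, dist_comm]
      exact le_of_lt (Metric.mem_ball.mp hbb)
    show dist (y (uB U g)) (x (uB U g)) ≤ 3*(ε/4)
    rw [dist_eq_norm]
    calc ‖y (uB U g) - x (uB U g)‖
        = ‖(y (uB U g) - y b) + (y b - x b) + (x b - x (uB U g))‖ := by ring_nf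
      _ ≤ ‖(y (uB U g) - y b) + (y b - x b)‖ + ‖x b - x (uB U g)‖ := norm_add_le _ _
      _ ≤ ‖y (uB U g) - y b‖ + ‖y b - x b‖ + ‖x b - x (uB U g)‖ := by
          gcongr; exact norm_add_le _ _
      _ ≤ 3*(ε/4) := by linarith
  linarith [hle]

end Setup3

lemma finite_of_isCompact_of_sep {X : Type*} [MetricSpace X] {S : Set X} (hS : IsCompact S)
    (hsep : ∀ a ∈ S, ∀ b ∈ S, a ≠ b → 1 ≤ dist a b) : S.Finite := by
  obtain ⟨t, ht⟩ := hS.elim_finite_subcover (fun s : S => Metric.ball (s : X) (1/2))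
    (fun _ => Metric.isOpen_ball)
    (fun a ha => Set.mem_iUnion.2 ⟨⟨a, ha⟩, Metric.mem_ball_self (by norm_num)⟩)
  have hfin : ((fun s : S => (s : X)) '' (t : Set S)).Finite := t.finite_toSet.image _
  refine Set.Finite.subset hfin ?_
  intro a ha
  obtain ⟨s, hst, hs⟩ : ∃ s ∈ t, a ∈ Metric.ball (s : X) (1/2) := by
    simpa using ht ha
  have : a = (s : X) := by
    by_contra hne
    have := hsep a ha s s.2 hne
    rw [Metric.mem_ball] at hs
    linarith
  exact ⟨s, by simpa using hst, this.symm⟩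

section Setup4
set_option linter.unusedSectionVars false
variable {G : Type*} [CommGroup G] [TopologicalSpace G] [IsTopologicalGroup G] [CompactSpace G]
    {A : Type*} [NormedRing A] [StarRing A] [CStarRing A] [NormedAlgebra ℂ A]
    [CompleteSpace A] [StarModule ℂ A]
    (U : G →* unitary A) (hU : Continuous fun g : G => (U g : A))

lemma Phi_sep [Nontrivial A] (x y : characterSpace ℂ (repAlg U))
    (hne : Phi U hU x ≠ Phi U hU y) : 1 ≤ dist (Phi U hU x) (Phi U hU y) := by
  have : ∃ g : G, x (uB U g) ≠ y (uB U g) := by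
    by_contra h
    push_neg at h
    exact hne (ContinuousMap.ext fun g => h g)
  obtain ⟨g₀, hg₀⟩ := this
  obtain ⟨k, hk⟩ := exists_pow_sep (abs_char U x g₀) (abs_char U y g₀) hg₀
  have hx : x (uB U (g₀ ^ k)) = x (uB U g₀) ^ k := by rw [map_pow, map_pow]
  have hy : y (uB U (g₀ ^ k)) = y (uB U g₀) ^ k := by rw [map_pow, map_pow]
  calc (1:ℝ) ≤ ‖x (uB U g₀) ^ k - y (uB U g₀) ^ k‖ := hk
    _ = dist (Phi U hU x (g₀ ^ k)) (Phi U hU y (g₀ ^ k)) := by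
        rw [Complex.dist_eq]
        show _ = ‖x (uB U (g₀ ^ k)) - y (uB U (g₀ ^ k))‖
        rw [hx, hy]
    _ ≤ dist (Phi U hU x) (Phi U hU y) := ContinuousMap.dist_apply_le_dist _

lemma finite_range_Phi [Nontrivial A] : (Set.range (Phi U hU)).Finite := by
  refine finite_of_isCompact_of_sep (isCompact_range (continuous_Phi U hU)) ?_
  rintro - ⟨x, rfl⟩ - ⟨y, rfl⟩ hne
  exact Phi_sep U hU x y hne

end Setup4

set_option maxHeartbeats 2000000 in
/-- **Finite spectral decomposition of norm-continuous representations of compact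
abelian groups in C*-algebras**: a norm-continuous representation `U` of a compact
abelian group `G` in a unital C*-algebra `A` decomposes as
`U g = ∑ i, χ i g • p i` for finitely many pairwise distinct continuous characters
`χ i : G → 𝕋` and nonzero pairwise orthogonal projections `p i ∈ A` summing to `1`. -/
theorem finite_spectral_decomposition_cstar
    {G : Type*} [CommGroup G] [TopologicalSpace G] [IsTopologicalGroup G] [CompactSpace G]
    {A : Type*} [NormedRing A] [StarRing A] [CStarRing A] [NormedAlgebra ℂ A]
    [CompleteSpace A] [StarModule ℂ A]
    (U : G →* unitary A) (hU : Continuous fun g : G => (U g : A)) :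
    ∃ (n : ℕ) (χ : Fin n → ContinuousMonoidHom G Circle) (p : Fin n → A),
      Function.Injective χ ∧
      (∀ i, p i ≠ 0) ∧
      (∀ i, IsSelfAdjoint (p i)) ∧
      (∀ i, IsIdempotentElem (p i)) ∧
      (∀ i j, i ≠ j → p i * p j = 0) ∧
      (∑ i, p i = 1) ∧
      ∀ g : G, (U g : A) = ∑ i, ((χ i g : ℂ)) • p i := by
  by_cases hA : (1 : A) = 0
  · haveI : Subsingleton A := subsingleton_of_zero_eq_one hA.symm
    exact ⟨0, Fin.elim0, Fin.elim0, fun i => i.elim0, fun i => i.elim0, fun i => i.elim0,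
      fun i => i.elim0, fun i => i.elim0, Subsingleton.elim _ _,
      fun g => Subsingleton.elim _ _⟩
  haveI : Nontrivial A := nontrivial_of_ne 1 0 hA
  classical
  set B := repAlg U with hB
  set X := characterSpace ℂ B with hX
  set Φ := Phi U hU with hΦdef
  -- the finite range
  have hfin : (Set.range Φ).Finite := finite_range_Phi U hU
  set T := hfin.toFinset with hT
  set n := T.card with hn
  set e := T.equivFin with he
  set F : Fin n → C(G, ℂ) := fun i => ((e.symm i : T) : C(G, ℂ)) with hF
  have hFinj : Function.Injective F := fun i j hij => by
    have : (e.symm i : T) = (e.symm j : T) := Subtype.ext hij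
    simpa using e.symm.injective this
  have hFmem : ∀ i, F i ∈ Set.range Φ := fun i => hfin.mem_toFinset.mp (e.symm i).2
  -- chosen characters
  set xc : Fin n → X := fun i => (hFmem i).choose with hxc
  have hxcspec : ∀ i, Φ (xc i) = F i := fun i => (hFmem i).choose_spec
  -- index function
  set idx : X → Fin n := fun x => e ⟨Φ x, by simp [hT]⟩ with hidx
  have hidxspec : ∀ x : X, F (idx x) = Φ x := fun x => by
    simp only [hidx, hF, Equiv.symm_apply_apply]
  have hidx_eq : ∀ (x : X) (i : Fin n), Φ x = F i → idx x = i := fun x i h =>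
    hFinj (by rw [hidxspec x, h])
  -- the clopen fibers
  set sfib : Fin n → Set X := fun i => {x : X | Φ x = F i} with hsfib
  have hsfib_idx : ∀ (x : X) (i : Fin n), x ∈ sfib i ↔ idx x = i := fun x i => by
    constructor
    · exact hidx_eq x i
    · rintro rfl; exact (hidxspec x).symm
  have hclopen : ∀ i, IsClopen (sfib i) := by
    intro i
    constructor
    · exact IsClosed.preimage (continuous_Phi U hU) isClosed_singleton
    · have : sfib i = Φ ⁻¹' Metric.ball (F i) (1/2) := by
        ext x
        simp only [hsfib, Set.mem_setOf_eq, Set.mem_preimage, Metric.mem_ball]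
        constructor
        · intro h; rw [h]; simpa using by norm_num
        · intro h
          by_contra hne
          have hsep : (1:ℝ) ≤ dist (Φ x) (F i) := by
            rw [← hxcspec i] at hne ⊢
            exact Phi_sep U hU x (xc i) hne
          linarith
      rw [this]
      exact (continuous_Phi U hU).isOpen_preimage _ Metric.isOpen_ball
  -- the indicator functions
  set ind : Fin n → C(X, ℂ) := fun i =>
    ⟨(sfib i).indicator fun _ => (1:ℂ),
      continuous_indicator (by simp [(hclopen i)]) continuous_const.continuousOn⟩ with hind
  have hind_apply : ∀ (i : Fin n) (x : X), ind i x = if idx x = i then 1 else 0 := by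
    intro i x
    by_cases h : x ∈ sfib i
    · rw [if_pos ((hsfib_idx x i).mp h)]
      exact Set.indicator_of_mem h (fun _ => (1:ℂ))
    · rw [if_neg (fun hh => h ((hsfib_idx x i).mpr hh))]
      exact Set.indicator_of_notMem h (fun _ => (1:ℂ))
  -- Gelfand transform
  set E := gelfandStarTransform B with hE
  set q : Fin n → B := fun i => E.symm (ind i) with hq
  set p : Fin n → A := fun i => (q i : A) with hp
  -- the characters
  set χ : Fin n → ContinuousMonoidHom G Circle := fun i =>
    { toFun := fun g => ⟨xc i (uB U g),
        mem_sphere_zero_iff_norm.mpr (by exact abs_char U (xc i) g)⟩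
      map_one' := by
        ext
        show (xc i) (uB U 1) = 1
        rw [map_one, map_one]
      map_mul' := fun g h => by
        ext
        show (xc i) (uB U (g*h)) = (xc i) (uB U g) * (xc i) (uB U h)
        rw [map_mul, map_mul]
      continuous_toFun := by
        apply Continuous.subtype_mk
        exact (map_continuous (xc i)).comp (continuous_uB U hU) } with hχ
  have hχ_apply : ∀ (i : Fin n) (g : G), (χ i g : ℂ) = F i g := by
    intro i g
    show xc i (uB U g) = F i g
    rw [← hxcspec i]
    rfl
  refine ⟨n, χ, p, ?_, ?_, ?_, ?_, ?_, ?_, ?_⟩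
  · -- injectivity of χ
    intro i j hij
    apply hFinj
    ext g
    rw [← hχ_apply i g, ← hχ_apply j g, hij]
  · -- p i ≠ 0
    intro i h0
    have hq0 : q i = 0 := by
      apply Subtype.ext
      rw [ZeroMemClass.coe_zero]
      exact h0
    have : ind i = 0 := by
      have := congrArg E hq0
      rw [hq, StarAlgEquiv.apply_symm_apply, map_zero] at this
      exact this
    have h1 : ind i (xc i) = 1 := by
      rw [hind_apply]
      rw [if_pos (hidx_eq _ _ (hxcspec i))]
    rw [this] at h1
    simp at h1
  · -- selfadjoint
    intro i
    have hstar : star (ind i) = ind i := by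
      ext x
      show star (ind i x) = ind i x
      rw [hind_apply]
      split_ifs <;> simp
    have : star (q i) = q i := by
      rw [hq, ← map_star, hstar]
    show star (p i) = p i
    exact congrArg Subtype.val this
  · -- idempotent
    intro i
    have hmul : ind i * ind i = ind i := by
      ext x
      show ind i x * ind i x = ind i x
      rw [hind_apply]
      split_ifs <;> simp
    show p i * p i = p i
    rw [hp]
    show ((q i : A) * (q i : A)) = (q i : A)
    rw [← MulMemClass.coe_mul, ← map_mul, hmul]
  · -- orthogonal
    intro i j hij
    have hmul : ind i * ind j = 0 := by
      ext x
      show ind i x * ind j x = 0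
      rw [hind_apply, hind_apply]
      split_ifs with h1 h2
      · exact absurd (h1.symm.trans h2) hij
      · simp
      · simp
      · simp
    show (q i : A) * (q j : A) = 0
    rw [← MulMemClass.coe_mul, ← map_mul, hmul, map_zero]
    rfl
  · -- sum = 1
    have hsum : (∑ i, ind i) = 1 := by
      ext x
      show (∑ i, ind i) x = 1
      rw [ContinuousMap.sum_apply]
      rw [Finset.sum_congr rfl fun i _ => hind_apply i x]
      rw [Finset.sum_ite_eq Finset.univ (idx x) (fun _ => (1:ℂ))]
      simp
    have hq1 : (∑ i, q i) = 1 := by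
      rw [hq, ← map_sum, hsum, map_one]
    show (∑ i, (q i : A)) = 1
    rw [← AddSubmonoidClass.coe_finset_sum, hq1, OneMemClass.coe_one]
  · -- decomposition
    intro g
    have hC : E (uB U g) = ∑ i, (F i g) • ind i := by
      ext x
      rw [ContinuousMap.sum_apply]
      have hterm : ∀ i : Fin n, ((F i g) • ind i) x = if idx x = i then F i g else 0 := by
        intro i
        show (F i g) * ind i x = _
        rw [hind_apply]
        split_ifs <;> simp
      rw [Finset.sum_congr rfl fun i _ => hterm i]
      rw [Finset.sum_ite_eq Finset.univ (idx x) (fun i => F i g)]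
      simp only [Finset.mem_univ, if_true]
      have hL : (E (uB U g)) x = x (uB U g) := by
        rw [hE]; exact gelfandStarTransform_apply_apply _ _ _
      rw [hL]
      show x (uB U g) = F (idx x) g
      rw [hidxspec x]
      rfl
    have key : uB U g = ∑ i, (F i g) • q i := by
      have h2 := congrArg E.symm hC
      rw [StarAlgEquiv.symm_apply_apply] at h2
      have h3 : E.symm (∑ i, (F i g) • ind i) = ∑ i, E.symm ((F i g) • ind i) :=
        map_sum E.symm _ _
      rw [h2, h3]
      refine Finset.sum_congr rfl fun i _ => ?_
      rw [map_smul]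
    have : (U g : A) = ((∑ i, (F i g) • q i : B) : A) := by
      rw [← key]; rfl
    rw [this, AddSubmonoidClass.coe_finset_sum]
    refine Finset.sum_congr rfl fun i _ => ?_
    rw [hχ_apply]
    rfl
end

section
/- Finite spectral decomposition of norm-continuous Banach-space representations of compact abelian groups: let G be a compact abelian topological group, E a complex Banach space, and ρ a norm-continuous representation of G on E. Then there exist finitely many pairwise distinct continuous characters χ₁, …, χ_n : G → 𝕋 and nonzero idempotent bounded operators e₁, …, e_n on E with e_i e_j = 0 for i ≠ j and e₁ + ⋯ + e_n = 1, such that ρ(g) = χ₁(g) e₁ + ⋯ + χ_n(g) e_n for every g ∈ G. -/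
open MeasureTheory Topology

private lemma aux_sep_finite {X : Type*} [MetricSpace X] {s T : Set X}
    (hs : TotallyBounded s) (hT : T ⊆ s)
    (hsep : ∀ x ∈ T, ∀ y ∈ T, x ≠ y → 1 ≤ dist x y) : T.Finite := by
  classical
  obtain ⟨t, htf, hcover⟩ := Metric.totallyBounded_iff.mp hs (1/2) (by norm_num)
  have hc : ∀ x ∈ T, ∃ c ∈ t, x ∈ Metric.ball c (1/2) := by
    intro x hx
    simpa using hcover (hT hx)
  choose! F hF1 hF2 using hc
  have himage : F '' T ⊆ t := by rintro _ ⟨x, hx, rfl⟩; exact hF1 x hx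
  refine Set.Finite.of_finite_image (htf.subset himage) ?_
  intro x hx y hy hxy
  by_contra hne
  have hx2 : dist x (F x) < 1/2 := Metric.mem_ball.mp (hF2 x hx)
  have hy2 : dist y (F x) < 1/2 := by rw [hxy]; exact Metric.mem_ball.mp (hF2 y hy)
  have htri : dist x y ≤ dist x (F x) + dist y (F x) := dist_triangle_right x y (F x)
  have := hsep x hx y hy hne
  linarith

set_option maxHeartbeats 1000000 in
private theorem core_decomp
    {G : Type*} [CommGroup G] [TopologicalSpace G] [IsTopologicalGroup G] [CompactSpace G]
    [MeasurableSpace G] [BorelSpace G]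
    (μ : Measure G) [μ.IsMulLeftInvariant] [IsProbabilityMeasure μ]
    {B : Type*} [NormedCommRing B] [NormedAlgebra ℂ B] [CompleteSpace B]
    (j : G →* B) (hj : Continuous j) :
    ∃ (S : Finset (ContinuousMonoidHom G Circle)) (e : ContinuousMonoidHom G Circle → B),
      (∀ χ ∈ S, e χ ≠ 0) ∧
      (∀ χ : ContinuousMonoidHom G Circle, e χ * e χ = e χ) ∧
      (∀ χ ψ : ContinuousMonoidHom G Circle, χ ≠ ψ → e χ * e ψ = 0) ∧
      (∑ χ ∈ S, e χ = 1) ∧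
      (∀ g : G, j g = ∑ χ ∈ S, ((χ g : ℂ)) • e χ) := by
  classical
  have hint : ∀ f : G → B, Continuous f → Integrable f μ := fun f hf =>
    hf.integrable_of_hasCompactSupport (HasCompactSupport.of_compactSpace f)
  -- the averaging elements
  set eA : ContinuousMonoidHom G Circle → B := fun χ =>
    ∫ g, (((χ g)⁻¹ : Circle) : ℂ) • j g ∂μ with heAdef
  have hfcont : ∀ χ : ContinuousMonoidHom G Circle,
      Continuous fun g : G => (((χ g)⁻¹ : Circle) : ℂ) • j g := fun χ =>
    (continuous_subtype_val.comp (map_continuous χ).inv).smul hj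
  have h1 : ∀ (χ : ContinuousMonoidHom G Circle) (g₀ : G),
      j g₀ * eA χ = ((χ g₀ : Circle) : ℂ) • eA χ := by
    intro χ g₀
    calc j g₀ * eA χ
        = ∫ g, (ContinuousLinearMap.mul ℂ B (j g₀)) ((((χ g)⁻¹ : Circle) : ℂ) • j g) ∂μ :=
          ((ContinuousLinearMap.mul ℂ B (j g₀)).integral_comp_comm (hint _ (hfcont χ))).symm
      _ = ∫ g, (((χ g)⁻¹ : Circle) : ℂ) • j (g₀ * g) ∂μ := by
          refine integral_congr_ae (Filter.Eventually.of_forall fun g => ?_)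
          dsimp only
          rw [_root_.map_smul, ContinuousLinearMap.mul_apply', ← map_mul]
      _ = ∫ g, ((χ g₀ : Circle) : ℂ) • ((((χ (g₀ * g))⁻¹ : Circle) : ℂ) • j (g₀ * g)) ∂μ := by
          refine integral_congr_ae (Filter.Eventually.of_forall fun g => ?_)
          dsimp only
          rw [smul_smul, ← Circle.coe_mul]
          congr 2
          rw [map_mul, mul_inv_rev, mul_comm ((χ g)⁻¹) ((χ g₀)⁻¹), ← mul_assoc,
            mul_inv_cancel, one_mul]
      _ = ((χ g₀ : Circle) : ℂ) • ∫ g, (((χ (g₀ * g))⁻¹ : Circle) : ℂ) • j (g₀ * g) ∂μ :=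
          integral_smul _ _
      _ = ((χ g₀ : Circle) : ℂ) • eA χ := by
          rw [integral_mul_left_eq_self (fun g : G => (((χ g)⁻¹ : Circle) : ℂ) • j g) g₀]
  have hscal : ∀ χ ψ : ContinuousMonoidHom G Circle,
      (∫ g, ((((χ g)⁻¹ : Circle) : ℂ) * ((ψ g : Circle) : ℂ)) ∂μ) = if χ = ψ then 1 else 0 := by
    intro χ ψ
    by_cases h : χ = ψ
    · subst h
      rw [if_pos rfl]
      have hone : ∀ g : G, ((((χ g)⁻¹ : Circle) : ℂ) * ((χ g : Circle) : ℂ)) = 1 := fun g => by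
        rw [← Circle.coe_mul, inv_mul_cancel, Circle.coe_one]
      rw [integral_congr_ae (Filter.Eventually.of_forall hone)]
      simp
    · rw [if_neg h]
      obtain ⟨g₀, hg₀⟩ : ∃ g₀, χ g₀ ≠ ψ g₀ := by
        by_contra hc
        push_neg at hc
        exact h (ContinuousMonoidHom.ext hc)
      set k : G → ℂ := fun g => (((χ g)⁻¹ : Circle) : ℂ) * ((ψ g : Circle) : ℂ) with hkdef
      have hkmul : ∀ g : G, k (g₀ * g) = k g₀ * k g := by
        intro g
        simp only [hkdef, map_mul, mul_inv_rev, Circle.coe_mul, Circle.coe_inv]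
        ring
      have hinv := integral_mul_left_eq_self (μ := μ) k g₀
      rw [integral_congr_ae (Filter.Eventually.of_forall hkmul), integral_const_mul] at hinv
      have hk₀ : k g₀ ≠ 1 := by
        intro hk1
        apply hg₀
        have : ((χ g₀)⁻¹ * ψ g₀ : Circle) = 1 := Circle.coe_injective (by
          rw [Circle.coe_mul, Circle.coe_one]; exact hk1)
        rw [inv_mul_eq_one] at this
        exact this
      have hz : (k g₀ - 1) * ∫ g, k g ∂μ = 0 := by
        rw [sub_mul, one_mul, hinv, sub_self]
      exact (mul_eq_zero.mp hz).resolve_left (sub_ne_zero.mpr hk₀)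
  have h2 : ∀ χ ψ : ContinuousMonoidHom G Circle,
      eA χ * eA ψ = if χ = ψ then eA ψ else 0 := by
    intro χ ψ
    calc eA χ * eA ψ
        = ∫ g, ((ContinuousLinearMap.mul ℂ B).flip (eA ψ)) ((((χ g)⁻¹ : Circle) : ℂ) • j g) ∂μ :=
          (((ContinuousLinearMap.mul ℂ B).flip (eA ψ)).integral_comp_comm
            (hint _ (hfcont χ))).symm
      _ = ∫ g, ((((χ g)⁻¹ : Circle) : ℂ) * ((ψ g : Circle) : ℂ)) • eA ψ ∂μ := by
          refine integral_congr_ae (Filter.Eventually.of_forall fun g => ?_)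
          dsimp only
          rw [_root_.map_smul, ContinuousLinearMap.flip_apply, ContinuousLinearMap.mul_apply',
            h1 ψ g, smul_smul]
      _ = (∫ g, ((((χ g)⁻¹ : Circle) : ℂ) * ((ψ g : Circle) : ℂ)) ∂μ) • eA ψ :=
          integral_smul_const _ _
      _ = if χ = ψ then eA ψ else 0 := by
          rw [hscal χ ψ]
          by_cases h : χ = ψ <;> simp [h]
  -- the set of nonvanishing coefficients is finite
  set S : Set (ContinuousMonoidHom G Circle) := {χ | eA χ ≠ 0} with hSdef
  have hSfin : S.Finite := by
    have hKcomp : IsCompact (Set.range (fun p : Circle × G => ((p.1 : ℂ)) • j p.2)) :=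
      isCompact_range (X := Circle × G) (by exact (continuous_subtype_val.comp continuous_fst).smul (hj.comp continuous_snd))
    have hstb : TotallyBounded
        (closure (convexHull ℝ (Set.range (fun p : Circle × G => ((p.1 : ℂ)) • j p.2)))) :=
      (totallyBounded_convexHull.mpr hKcomp.totallyBounded).closure
    have hmem : ∀ χ : ContinuousMonoidHom G Circle,
        eA χ ∈ closure (convexHull ℝ (Set.range (fun p : Circle × G => ((p.1 : ℂ)) • j p.2))) := by
      intro χ
      refine Convex.integral_mem ((convex_convexHull ℝ _).closure) isClosed_closure
        (Filter.Eventually.of_forall fun g => ?_) (hint _ (hfcont χ))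
      exact subset_closure (subset_convexHull ℝ _ ⟨((χ g)⁻¹, g), rfl⟩)
    have himT : (eA '' S) ⊆
        closure (convexHull ℝ (Set.range (fun p : Circle × G => ((p.1 : ℂ)) • j p.2))) := by
      rintro _ ⟨χ, _, rfl⟩; exact hmem χ
    have hsep : ∀ x ∈ eA '' S, ∀ y ∈ eA '' S, x ≠ y → 1 ≤ dist x y := by
      rintro _ ⟨χ, hχ, rfl⟩ _ ⟨ψ, hψ, rfl⟩ hne
      have hχψ : χ ≠ ψ := by rintro rfl; exact hne rfl
      have hmul : (eA χ - eA ψ) * eA χ = eA χ := by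
        rw [sub_mul, h2 χ χ, h2 ψ χ, if_pos rfl, if_neg (fun h => hχψ h.symm), sub_zero]
      have hle := norm_mul_le (eA χ - eA ψ) (eA χ)
      rw [hmul] at hle
      have h0 : 0 < ‖eA χ‖ := norm_pos_iff.mpr hχ
      rw [dist_eq_norm]
      nlinarith
    have himfin := aux_sep_finite hstb himT hsep
    refine Set.Finite.of_finite_image himfin ?_
    intro χ hχ ψ hψ h
    by_contra hne
    have h3 : eA χ = 0 := by
      calc eA χ = eA χ * eA χ := by rw [h2, if_pos rfl]
        _ = eA χ * eA ψ := by rw [h]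
        _ = 0 := by rw [h2, if_neg hne]
    exact hχ h3
  set SF : Finset (ContinuousMonoidHom G Circle) := hSfin.toFinset with hSFdef
  have hSFmem : ∀ χ : ContinuousMonoidHom G Circle, χ ∈ SF ↔ eA χ ≠ 0 := by
    intro χ
    rw [hSFdef, Set.Finite.mem_toFinset, hSdef]
    exact Iff.rfl
  set P : B := ∑ χ ∈ SF, eA χ with hPdef
  have hPP : P * P = P := by
    rw [hPdef, Finset.sum_mul_sum]
    refine Finset.sum_congr rfl fun χ hχ => ?_
    exact (Finset.sum_eq_single χ (fun ψ _ hne => by rw [h2, if_neg fun hh => hne hh.symm])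
      (fun hh => absurd hχ hh)).trans (by rw [h2, if_pos rfl])
  have hjP : ∀ g : G, j g * P = ∑ χ ∈ SF, ((χ g : Circle) : ℂ) • eA χ := by
    intro g
    rw [hPdef, Finset.mul_sum]
    exact Finset.sum_congr rfl fun χ _ => h1 χ g
  -- the sum of the idempotents is 1
  have hQ0 : (1 : B) - P = 0 := by
    by_contra hQne
    haveI : Nontrivial B := nontrivial_of_ne _ _ hQne
    have hQQ : ((1 : B) - P) * ((1 : B) - P) = (1 : B) - P := by
      have hexp : ((1 : B) - P) * ((1 : B) - P) = 1 - P - P + P * P := by ring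
      rw [hexp, hPP]
      ring
    have hnotunit : ¬ IsUnit ((1 : B) - ((1 : B) - P)) := by
      intro hu
      obtain ⟨u, hu⟩ := hu
      have h0 : ((1 : B) - ((1 : B) - P)) * ((1 : B) - P) = 0 := by
        have : ((1 : B) - ((1 : B) - P)) * ((1 : B) - P) = (1 - P) - (1-P)*(1-P) := by ring
        rw [this, hQQ, sub_self]
      have hzero : (1 : B) - P = 0 := by
        calc (1 : B) - P = (↑u⁻¹ : B) * (↑u * ((1 : B) - P)) := by
              rw [← mul_assoc, Units.inv_mul, one_mul]
          _ = 0 := by rw [hu, h0, mul_zero]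
      exact hQne hzero
    have hspec : (1 : ℂ) ∈ spectrum ℂ ((1 : B) - P) := by
      rw [spectrum.mem_iff, map_one]
      exact hnotunit
    obtain ⟨φ, hφ⟩ := WeakDual.CharacterSpace.mem_spectrum_iff_exists.mp hspec
    obtain ⟨C, hC⟩ : ∃ C : ℝ, ∀ g : G, ‖j g‖ ≤ C := by
      obtain ⟨C, hC⟩ := (isCompact_range hj.norm).bddAbove
      exact ⟨C, fun g => hC ⟨g, rfl⟩⟩
    have hone : ∀ h : G, φ (j h) * φ (j h⁻¹) = 1 := by
      intro h
      rw [← map_mul φ, ← map_mul j, mul_inv_cancel, map_one j, map_one φ]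
    have hbnd : ∀ h : G, ‖φ (j h)‖ ≤ C * ‖(1 : B)‖ := by
      intro h
      have h5 := AlgHom.norm_apply_le_self_mul_norm_one φ (j h)
      exact h5.trans (mul_le_mul_of_nonneg_right (hC h) (norm_nonneg _))
    have hmod : ∀ g : G, ‖φ (j g)‖ = 1 := by
      intro g
      have habs : ∀ h : G, ∀ n : ℕ, ‖φ (j h)‖ ^ n ≤ C * ‖(1 : B)‖ := by
        intro h n
        have h6 : (φ (j h)) ^ n = φ (j (h ^ n)) := by rw [map_pow j, map_pow φ]
        calc ‖φ (j h)‖ ^ n = ‖(φ (j h)) ^ n‖ := (norm_pow _ n).symm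
          _ = ‖φ (j (h ^ n))‖ := by rw [h6]
          _ ≤ C * ‖(1 : B)‖ := hbnd _
      have hle1 : ∀ h : G, ‖φ (j h)‖ ≤ 1 := by
        intro h
        by_contra hgt
        push_neg at hgt
        obtain ⟨n, hn⟩ := pow_unbounded_of_one_lt (C * ‖(1 : B)‖) hgt
        exact absurd (habs h n) (not_le.mpr hn)
      have hrs : ‖φ (j g)‖ * ‖φ (j g⁻¹)‖ = 1 := by
        rw [← norm_mul, hone g, norm_one]
      have h7 := hle1 g
      have h8 := hle1 g⁻¹
      have h9 : (0:ℝ) ≤ ‖φ (j g)‖ := norm_nonneg _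
      have h10 : (0:ℝ) ≤ ‖φ (j g⁻¹)‖ := norm_nonneg _
      nlinarith
    have hmem0 : ∀ g : G, φ (j g) ∈ Submonoid.unitSphere ℂ := by
      intro g
      simp only [Submonoid.unitSphere, Submonoid.mem_mk, Subsemigroup.mem_mk,
        mem_sphere_zero_iff_norm]
      exact hmod g
    set χ₀ : ContinuousMonoidHom G Circle :=
      ⟨{ toFun := fun g => (⟨φ (j g), hmem0 g⟩ : Circle)
         map_one' := by ext; simp only []; rw [map_one j, map_one φ, Circle.coe_one]
         map_mul' := fun g h => by ext; simp only [Circle.coe_mul]; rw [map_mul j, map_mul φ]; rfl },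
       Continuous.subtype_mk ((map_continuous φ).comp hj) _⟩ with hχ₀def
    have happ : ∀ g : G, ((χ₀ g : Circle) : ℂ) = φ (j g) := fun g => rfl
    have hphi_e : φ (eA χ₀) = 1 := by
      set φL : B →L[ℂ] ℂ :=
        ⟨{ toFun := ⇑φ, map_add' := fun x y => map_add φ x y,
           map_smul' := fun c x => by simpa using map_smul φ c x }, map_continuous φ⟩ with hφLdef
      have hφL : ∀ x : B, φL x = φ x := fun x => rfl
      have hcomm := φL.integral_comp_comm (hint _ (hfcont χ₀))
      have h11 : φ (eA χ₀) = ∫ g, φL ((((χ₀ g)⁻¹ : Circle) : ℂ) • j g) ∂μ := by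
        rw [hcomm, heAdef, hφL]
      rw [h11]
      have h12 : ∀ g : G, φL ((((χ₀ g)⁻¹ : Circle) : ℂ) • j g) = 1 := by
        intro g
        rw [_root_.map_smul, hφL, smul_eq_mul, ← happ g, ← Circle.coe_mul, inv_mul_cancel,
          Circle.coe_one]
      rw [integral_congr_ae (Filter.Eventually.of_forall h12)]
      simp
    have hφP : φ P = 0 := by
      have h13 : φ ((1:B) - P) = 1 := hφ
      have h14 : φ ((1:B) - P) = 1 - φ P := by rw [map_sub, map_one]
      rw [h14] at h13
      exact sub_eq_self.mp h13
    by_cases hin : χ₀ ∈ SF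
    · have h15 : eA χ₀ * P = eA χ₀ := by
        rw [hPdef, Finset.mul_sum]
        exact (Finset.sum_eq_single χ₀ (fun ψ _ hne => by rw [h2, if_neg fun hh => hne hh.symm])
          (fun hh => absurd hin hh)).trans (by rw [h2, if_pos rfl])
      have h16 := congrArg φ h15
      rw [map_mul, hphi_e, hφP] at h16
      simp at h16
    · have h17 : eA χ₀ = 0 := by
        by_contra hne0
        exact hin ((hSFmem χ₀).mpr hne0)
      rw [h17, map_zero] at hphi_e
      exact zero_ne_one hphi_e
  have hPone : P = 1 := (sub_eq_zero.mp hQ0).symm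
  refine ⟨SF, eA, ?_, ?_, ?_, ?_, ?_⟩
  · exact fun χ hχ => (hSFmem χ).mp hχ
  · intro χ; rw [h2, if_pos rfl]
  · intro χ ψ hne; rw [h2, if_neg hne]
  · rw [← hPdef]; exact hPone
  · intro g
    rw [← hjP g, hPone, mul_one]


set_option maxHeartbeats 1000000
set_option synthInstance.maxHeartbeats 400000

/-- **Finite spectral decomposition of norm-continuous Banach-space representations of
compact abelian groups**: a norm-continuous representation `ρ` of a compact abelian
group `G` on a complex Banach space `E` decomposes as `ρ g = ∑ i, χ i g • e i` for
finitely many pairwise distinct continuous characters `χ i : G → 𝕋` and nonzero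
pairwise orthogonal idempotent bounded operators `e i` summing to `1`. -/
theorem finite_spectral_decomposition_banach
    {G : Type*} [CommGroup G] [TopologicalSpace G] [IsTopologicalGroup G] [CompactSpace G]
    {E : Type*} [NormedAddCommGroup E] [NormedSpace ℂ E] [CompleteSpace E]
    (ρ : G →* (E →L[ℂ] E)ˣ) (hρ : Continuous fun g : G => (ρ g : E →L[ℂ] E)) :
    ∃ (n : ℕ) (χ : Fin n → ContinuousMonoidHom G Circle) (e : Fin n → E →L[ℂ] E),
      Function.Injective χ ∧
      (∀ i, e i ≠ 0) ∧
      (∀ i, IsIdempotentElem (e i)) ∧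
      (∀ i j, i ≠ j → e i * e j = 0) ∧
      (∑ i, e i = 1) ∧
      ∀ g : G, (ρ g : E →L[ℂ] E) = ∑ i, ((χ i g : ℂ)) • e i := by
  classical
  letI : MeasurableSpace G := borel G
  haveI : BorelSpace G := ⟨rfl⟩
  haveI : Nonempty G := ⟨1⟩
  set μ : Measure G :=
    MeasureTheory.Measure.haarMeasure (⊤ : TopologicalSpace.PositiveCompacts G) with hμdef
  haveI hinv : μ.IsMulLeftInvariant := by rw [hμdef]; infer_instance
  haveI : IsProbabilityMeasure μ := ⟨by
    rw [hμdef, ← TopologicalSpace.PositiveCompacts.coe_top (α := G)]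
    exact MeasureTheory.Measure.haarMeasure_self⟩
  have hgen : ∀ a ∈ Set.range (fun g : G => (ρ g : E →L[ℂ] E)),
      ∀ b ∈ Set.range (fun g : G => (ρ g : E →L[ℂ] E)), a * b = b * a := by
    rintro _ ⟨g, rfl⟩ _ ⟨h, rfl⟩
    rw [← Units.val_mul, ← Units.val_mul, ← map_mul, ← map_mul, mul_comm]
  obtain ⟨A, hAcomm, hAclosed, hmemA⟩ :
      ∃ A : Subalgebra ℂ (E →L[ℂ] E), (∀ x y : A, x * y = y * x) ∧
        IsClosed (A : Set (E →L[ℂ] E)) ∧ ∀ g : G, (ρ g : E →L[ℂ] E) ∈ A := by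
    set A₀ : Subalgebra ℂ (E →L[ℂ] E) :=
      Algebra.adjoin ℂ (Set.range (fun g : G => (ρ g : E →L[ℂ] E))) with hA₀def
    have hA₀comm : ∀ x y : A₀, x * y = y * x := by
      intro x y
      letI := Algebra.adjoinCommRingOfComm ℂ hgen
      exact mul_comm x y
    refine ⟨A₀.topologicalClosure, ?_, Subalgebra.isClosed_topologicalClosure A₀, ?_⟩
    · intro x y
      letI := A₀.commRingTopologicalClosure hA₀comm
      exact mul_comm x y
    · exact fun g => A₀.le_topologicalClosure (Algebra.subset_adjoin ⟨g, rfl⟩)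
  haveI : CompleteSpace A := hAclosed.completeSpace_coe
  letI instA : NormedCommRing A := { (inferInstance : NormedRing A) with mul_comm := hAcomm }
  set jm : G →* A :=
    { toFun := fun g => ⟨(ρ g : E →L[ℂ] E), hmemA g⟩
      map_one' := by
        ext
        simp only [OneMemClass.coe_one]
        rw [map_one ρ, Units.val_one]
      map_mul' := fun g h => by
        ext
        simp only [MulMemClass.coe_mul]
        rw [map_mul ρ, Units.val_mul] } with hjmdef
  have hjc : Continuous jm := hρ.subtype_mk _
  obtain ⟨SF, e, hne, hidem, horth, hsum, hdecomp⟩ := core_decomp μ jm hjc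
  set n := SF.card with hndef
  set eqv : ↥SF ≃ Fin n := SF.equivFin with heqvdef
  set χf : Fin n → ContinuousMonoidHom G Circle := fun i => ((eqv.symm i : ↥SF) : ContinuousMonoidHom G Circle) with hχfdef
  have hχfmem : ∀ i, χf i ∈ SF := fun i => (eqv.symm i).2
  have hχfinj : Function.Injective χf := by
    intro i j h
    exact eqv.symm.injective (Subtype.coe_injective h)
  refine ⟨n, χf, fun i => ((e (χf i) : A) : E →L[ℂ] E), hχfinj, ?_, ?_, ?_, ?_, ?_⟩
  · intro i h
    refine hne (χf i) (hχfmem i) (ZeroMemClass.coe_eq_zero.mp ?_)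
    simpa using h
  · intro i
    show ((e (χf i) : A) : E →L[ℂ] E) * ((e (χf i) : A) : E →L[ℂ] E) = ((e (χf i) : A) : E →L[ℂ] E)
    rw [← MulMemClass.coe_mul]
    exact congrArg _ (hidem (χf i))
  · intro i j hij
    rw [← MulMemClass.coe_mul, horth _ _ (fun h => hij (hχfinj h)), ZeroMemClass.coe_zero]
  · rw [show (1 : E →L[ℂ] E) = A.val 1 from rfl, ← hsum, map_sum,
      ← Finset.sum_coe_sort SF (fun χ => A.val (e χ)),
      ← Equiv.sum_comp eqv.symm (fun x : ↥SF => A.val (e ↑x))]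
    rfl
  · intro g
    have hval : (ρ g : E →L[ℂ] E) = A.val (jm g) := rfl
    rw [hval, hdecomp g, map_sum,
      ← Finset.sum_coe_sort SF (fun χ => A.val (((χ g : Circle) : ℂ) • e χ)),
      ← Equiv.sum_comp eqv.symm (fun x : ↥SF => A.val ((((x : ContinuousMonoidHom G Circle) g : Circle) : ℂ) • e ↑x))]
    refine Finset.sum_congr rfl fun i _ => ?_
    rw [_root_.map_smul]
    rfl
end

section
/- Strong uniform convergence without norm convergence and without spectrum convergence (the paper's Example): let H be a complex Hilbert space, (P_n) a sequence of orthogonal projections on H with P_n x → x for every x ∈ H and P_n ≠ 1 for every n, and let 𝕋 be the circle group with Haar probability measure μ. Define U_n(z) := P_n + z·(1 − P_n) for z ∈ 𝕋, where z acts by scalar multiplication. Then: (i) each U_n is a norm-continuous unitary representation of 𝕋 on H; (ii) for every x ∈ H, sup_{z ∈ 𝕋} ‖U_n(z)x − x‖ → 0 as n → ∞; (iii) sup_{z ∈ 𝕋} ‖U_n(z) − 1‖ = 2 for every n, so U_n does not converge to the trivial representation in the supremum operator norm; and (iv) with χ₁ the identity character of 𝕋, the spectral projection ∫_𝕋 χ₁(z)⁻¹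 U_n(z) dμ(z) equals 1 − P_n ≠ 0 for every n, whereas the corresponding integral for the constant representation z ↦ 1 vanishes. -/
open MeasureTheory


lemma projection_norm_one {H : Type*} [NormedAddCommGroup H] [InnerProductSpace ℂ H]
    [CompleteSpace H] (Q : H →L[ℂ] H) (hsa : IsSelfAdjoint Q) (hidem : IsIdempotentElem Q)
    (hQ : Q ≠ 0) : ‖Q‖ = 1 := by
  have h1 : ‖Q‖ * ‖Q‖ = ‖Q‖ := by
    rw [← CStarRing.norm_star_mul_self, hsa.star_eq, hidem.eq]
  have h2 : ‖Q‖ ≠ 0 := norm_ne_zero_iff.mpr hQ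
  field_simp at h1
  tauto

lemma circle_char_integral_zero [MeasurableSpace Circle] [BorelSpace Circle]
    (μ : Measure Circle) [μ.IsHaarMeasure] [IsProbabilityMeasure μ] :
    (∫ z : Circle, ((z⁻¹ : Circle) : ℂ) ∂μ) = 0 := by
  set g : Circle := Circle.exp Real.pi with hg
  have hgc : (g : ℂ) = -1 := by
    simp [hg, Complex.exp_pi_mul_I]
  have key : (∫ z : Circle, (((g * z)⁻¹ : Circle) : ℂ) ∂μ)
      = ∫ z : Circle, ((z⁻¹ : Circle) : ℂ) ∂μ :=
    integral_mul_left_eq_self (fun z : Circle => ((z⁻¹ : Circle) : ℂ)) g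
  have key2 : (∫ z : Circle, (((g * z)⁻¹ : Circle) : ℂ) ∂μ)
      = ((g⁻¹ : Circle) : ℂ) * ∫ z : Circle, ((z⁻¹ : Circle) : ℂ) ∂μ := by
    rw [← integral_const_mul]
    congr 1
    ext z
    push_cast
    ring
  have hgi : ((g⁻¹ : Circle) : ℂ) = -1 := by
    rw [Circle.coe_inv, hgc]; norm_num
  rw [key2, hgi] at key
  linear_combination (-1/2 : ℂ) * key

lemma key_mul {A : Type*} [Ring A] [Algebra ℂ A] (p : A) (hp : IsIdempotentElem p)
    (c d : ℂ) : (p + c • (1 - p)) * (p + d • (1 - p)) = p + (c * d) • (1 - p) := by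
  have h1 : p * (1 - p) = 0 := by rw [mul_sub, mul_one, hp.eq, sub_self]
  have h2 : (1 - p) * p = 0 := by rw [sub_mul, one_mul, hp.eq, sub_self]
  have h3 : (1 - p) * (1 - p) = 1 - p := by rw [sub_mul, one_mul, h1, sub_zero]
  simp only [mul_add, add_mul, smul_mul_assoc, mul_smul_comm, hp.eq, h1, h2, h3,
    smul_zero, smul_smul, zero_add, add_zero]
  rw [mul_comm c d]

lemma circle_coe_continuous : Continuous (fun z : Circle => (z : ℂ)) :=
  continuous_subtype_val

lemma circle_inv_coe_integrable [MeasurableSpace Circle] [BorelSpace Circle]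
    (μ : Measure Circle) [IsProbabilityMeasure μ] :
    Integrable (fun z : Circle => ((z⁻¹ : Circle) : ℂ)) μ :=
  (circle_coe_continuous.comp continuous_inv).integrable_of_hasCompactSupport
    (HasCompactSupport.of_compactSpace _)


/-- **The paper's Example: strong uniform convergence without norm convergence and
without spectrum convergence.**  Let `(P n)` be orthogonal projections on a complex
Hilbert space `H` with `P n x → x` for every `x` and `P n ≠ 1`, and let
`U n z := P n + z • (1 − P n)` for `z` in the circle group `𝕋` with Haar probability
measure `μ`.  Then (i) each `U n` is a norm-continuous unitary representation of `𝕋`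
on `H`; (ii) `⨆ z, ‖U n z x − x‖ → 0` for every `x`; (iii) `⨆ z, ‖U n z − 1‖ = 2` for
every `n`; and (iv) the spectral projection `∫ z, z⁻¹ • U n z dμ` equals `1 − P n ≠ 0`
for every `n`, while the corresponding integral for the trivial representation
vanishes. -/
theorem example_strict_convergence_without_spectrum_convergence
    {H : Type*} [NormedAddCommGroup H] [InnerProductSpace ℂ H] [CompleteSpace H]
    [MeasurableSpace Circle] [BorelSpace Circle]
    (μ : Measure Circle) [μ.IsHaarMeasure] [IsProbabilityMeasure μ]
    (P : ℕ → H →L[ℂ] H)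
    (hsa : ∀ n, IsSelfAdjoint (P n))
    (hidem : ∀ n, IsIdempotentElem (P n))
    (hne : ∀ n, P n ≠ 1)
    (hconv : ∀ x : H, Filter.Tendsto (fun n => P n x) Filter.atTop (nhds x))
    (U : ℕ → Circle → H →L[ℂ] H)
    (hUdef : ∀ n z, U n z = P n + (z : ℂ) • ((1 : H →L[ℂ] H) - P n)) :
    (∀ n, (∀ z, U n z ∈ unitary (H →L[ℂ] H)) ∧ U n 1 = 1 ∧
        (∀ z w, U n (z * w) = U n z * U n w) ∧ Continuous (U n)) ∧
    (∀ x : H, Filter.Tendsto (fun n => ⨆ z : Circle, ‖U n z x - x‖)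
        Filter.atTop (nhds 0)) ∧
    (∀ n, (⨆ z : Circle, ‖U n z - 1‖) = 2) ∧
    (∀ n, (∫ z : Circle, ((z⁻¹ : Circle) : ℂ) • U n z ∂μ) = 1 - P n ∧
        (1 : H →L[ℂ] H) - P n ≠ 0) ∧
    (∫ z : Circle, ((z⁻¹ : Circle) : ℂ) • (1 : H →L[ℂ] H) ∂μ) = 0 := by
  have hQne : ∀ n, (1 : H →L[ℂ] H) - P n ≠ 0 := fun n =>
    sub_ne_zero.mpr (Ne.symm (hne n))
  have hQsa : ∀ n, IsSelfAdjoint ((1 : H →L[ℂ] H) - P n) := fun n =>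
    (IsSelfAdjoint.one (H →L[ℂ] H)).sub (hsa n)
  have hzinv : ∀ z : Circle, ((z⁻¹ : Circle) : ℂ) * (z : ℂ) = 1 := by
    intro z
    rw [← Circle.coe_mul, inv_mul_cancel, Circle.coe_one]
  have hstar : ∀ n (z : Circle), star (U n z) = P n + ((z⁻¹ : Circle) : ℂ) •
      ((1 : H →L[ℂ] H) - P n) := by
    intro n z
    rw [hUdef n z, star_add, star_smul, (hsa n).star_eq, (hQsa n).star_eq]
    congr 1
    rw [Circle.coe_inv_eq_conj]
    rfl
  have hUU : ∀ n (z w : Circle), U n z * U n w = P n + ((z : ℂ) * (w : ℂ)) •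
      ((1 : H →L[ℂ] H) - P n) := by
    intro n z w
    rw [hUdef n z, hUdef n w, key_mul (P n) (hidem n)]
  have hnorm : ∀ n, ‖(1 : H →L[ℂ] H) - P n‖ = 1 := fun n =>
    projection_norm_one _ (hQsa n) (hidem n).one_sub (hQne n)
  refine ⟨?_, ?_, ?_, ?_, ?_⟩
  · intro n
    refine ⟨?_, ?_, ?_, ?_⟩
    · intro z
      rw [Unitary.mem_iff]
      constructor
      · rw [hstar n z, hUdef n z, key_mul (P n) (hidem n), hzinv z, one_smul,
          add_sub_cancel]
      · rw [hstar n z, hUdef n z, key_mul (P n) (hidem n), mul_comm, hzinv z,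
          one_smul, add_sub_cancel]
    · rw [hUdef n 1, Circle.coe_one, one_smul, add_sub_cancel]
    · intro z w
      rw [hUU, hUdef, Circle.coe_mul]
    · have : Continuous (fun z : Circle => P n + (z : ℂ) • ((1 : H →L[ℂ] H) - P n)) :=
        continuous_const.add (circle_coe_continuous.smul continuous_const)
      have hU : U n = fun z : Circle => P n + (z : ℂ) • ((1 : H →L[ℂ] H) - P n) :=
        funext (hUdef n)
      rw [hU]
      exact this
  · intro x
    have hb : ∀ n (z : Circle), ‖U n z x - x‖ ≤ 2 * ‖x - P n x‖ := by
      intro n z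
      have : U n z x - x = ((z : ℂ) - 1) • (x - P n x) := by
        simp only [hUdef n z, ContinuousLinearMap.add_apply,
          ContinuousLinearMap.smul_apply, ContinuousLinearMap.sub_apply,
          ContinuousLinearMap.one_apply, sub_smul, one_smul, smul_sub]
        abel
      rw [this, norm_smul]
      have : ‖(z : ℂ) - 1‖ ≤ 2 := by
        calc ‖(z : ℂ) - 1‖ ≤ ‖(z : ℂ)‖ + ‖(1 : ℂ)‖ := norm_sub_le _ _
        _ = 2 := by simp [Circle.norm_coe]; norm_num
      exact mul_le_mul_of_nonneg_right this (norm_nonneg _)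
    have h0 : Filter.Tendsto (fun n => 2 * ‖x - P n x‖) Filter.atTop (nhds 0) := by
      have := (tendsto_iff_norm_sub_tendsto_zero.mp (hconv x))
      have h2 : Filter.Tendsto (fun n => ‖x - P n x‖) Filter.atTop (nhds 0) := by
        simpa [norm_sub_rev] using this
      simpa using h2.const_mul 2
    refine squeeze_zero (fun n => Real.iSup_nonneg fun z => norm_nonneg _)
      (fun n => Real.iSup_le (hb n) (by positivity)) h0
  · intro n
    have hval : ∀ z : Circle, ‖U n z - 1‖ = ‖(z : ℂ) - 1‖ := by
      intro z
      have : U n z - 1 = ((z : ℂ) - 1) • ((1 : H →L[ℂ] H) - P n) := by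
        rw [hUdef n z, sub_smul, one_smul]
        abel
      rw [this, norm_smul, hnorm n, mul_one]
    have hub : ∀ z : Circle, ‖U n z - 1‖ ≤ 2 := by
      intro z
      rw [hval z]
      calc ‖(z : ℂ) - 1‖ ≤ ‖(z : ℂ)‖ + ‖(1 : ℂ)‖ := norm_sub_le _ _
      _ = 2 := by simp [Circle.norm_coe]; norm_num
    refine le_antisymm (Real.iSup_le hub (by norm_num)) ?_
    have hbdd : BddAbove (Set.range fun z : Circle => ‖U n z - 1‖) :=
      ⟨2, by rintro _ ⟨z, rfl⟩; exact hub z⟩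
    have h2 : ‖U n (Circle.exp Real.pi) - 1‖ = 2 := by
      rw [hval]
      have : ((Circle.exp Real.pi : Circle) : ℂ) = -1 := by
        simp [Complex.exp_pi_mul_I]
      rw [this]
      norm_num
    calc (2 : ℝ) = ‖U n (Circle.exp Real.pi) - 1‖ := h2.symm
    _ ≤ ⨆ z : Circle, ‖U n z - 1‖ := le_ciSup hbdd _
  · intro n
    refine ⟨?_, hQne n⟩
    have heq : (fun z : Circle => ((z⁻¹ : Circle) : ℂ) • U n z)
        = fun z : Circle => ((z⁻¹ : Circle) : ℂ) • P n + ((1 : H →L[ℂ] H) - P n) := by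
      ext z
      rw [hUdef n z, smul_add, smul_smul, hzinv z, one_smul]
    rw [heq, integral_add ((circle_inv_coe_integrable μ).smul_const _)
      (integrable_const _), integral_smul_const, circle_char_integral_zero μ,
      zero_smul, zero_add, integral_const, probReal_univ, one_smul]
  · rw [integral_smul_const, circle_char_integral_zero μ, zero_smul]
end
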